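/- arXiv:1706.05550 — 4 statements merged into one kernel-verified Lean document; each statement's English description precedes it below -/
import Mathlib

section
/- Let 𝒫 be the Petersen graph. Then κ(𝒫) = 6, and for every real number k with 1 ≤ k ≤ 6, dim_f^k(𝒫) = 5k/3. -/
open Finset

namespace FracDim

variable {V : Type*}

/-- `R{x,y}`: the set of vertices `z` with `d(x,z) ≠ d(y,z)`. -/
noncomputable def resSet [Fintype V] (G : SimpleGraph V) (x y : V) : Finset V :=
  Finset.univ.filter (fun z => G.dist x z ≠ G.dist y z)

/-- `κ(G) = min { |R{x,y}| : x ≠ y }`. -/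
noncomputable def kappa [Fintype V] (G : SimpleGraph V) : ℕ :=
  sInf {n : ℕ | ∃ x y : V, x ≠ y ∧ (resSet G x y).card = n}

/-- A `k`-resolving function: `g : V → [0,1]` with `g(R{x,y}) ≥ k` for all distinct `x, y`. -/
def IsKResolving [Fintype V] (G : SimpleGraph V) (k : ℝ) (g : V → ℝ) : Prop :=
  (∀ v, 0 ≤ g v ∧ g v ≤ 1) ∧
    ∀ x y : V, x ≠ y → k ≤ ∑ z ∈ resSet G x y, g z

/-- The fractional `k`-metric dimension of `G`. -/
noncomputable def fracKDim [Fintype V] (G : SimpleGraph V) (k : ℝ) : ℝ :=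
  sInf {s : ℝ | ∃ g : V → ℝ, IsKResolving G k g ∧ s = ∑ v, g v}

/-- The fractional metric dimension of `G`. -/
noncomputable def fracDim [Fintype V] (G : SimpleGraph V) : ℝ :=
  fracKDim G 1

end FracDim

namespace FracDim

/-- The Petersen graph: vertices are the 2-element subsets of a 5-element set, two
vertices being adjacent when the corresponding subsets are disjoint. -/
def petersenGraph : SimpleGraph {s : Finset (Fin 5) // s.card = 2} :=
  SimpleGraph.fromRel (fun a b => Disjoint a.1 b.1)

abbrev PV := {s : Finset (Fin 5) // s.card = 2}

/-- Computable distance formula for the Petersen graph. -/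
def distP (x z : PV) : ℕ := if x = z then 0 else if Disjoint x.1 z.1 then 1 else 2

lemma common_nbr : ∀ x z : PV, x ≠ z → ¬ Disjoint x.1 z.1 →
    ∃ w : PV, Disjoint x.1 w.1 ∧ Disjoint w.1 z.1 := by decide

lemma cardA : ∀ x y : PV, x ≠ y →
    (univ.filter (fun z => distP x z ≠ distP y z)).card = 6 := by decide

lemma cardB : ∀ z : PV, ((univ ×ˢ univ).filter
    (fun p : PV × PV => p.1 ≠ p.2 ∧ distP p.1 z ≠ distP p.2 z)).card = 54 := by decide

lemma cardP : ((univ ×ˢ univ).filter (fun p : PV × PV => p.1 ≠ p.2)).card = 90 := by decide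

lemma cardV : Fintype.card PV = 10 := by decide

lemma adj_iff {x y : PV} : petersenGraph.Adj x y ↔ x ≠ y ∧ Disjoint x.1 y.1 := by
  constructor
  · rintro ⟨hne, h | h⟩
    · exact ⟨hne, h⟩
    · exact ⟨hne, h.symm⟩
  · rintro ⟨hne, h⟩
    exact ⟨hne, Or.inl h⟩

lemma ne_of_disjoint {x w : PV} (h : Disjoint x.1 w.1) : x ≠ w := by
  rintro rfl
  rw [disjoint_self] at h
  have := x.2
  rw [h] at this
  simp at this

lemma dist_eq (x z : PV) : petersenGraph.dist x z = distP x z := by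
  unfold distP
  split_ifs with h1 h2
  · subst h1; exact SimpleGraph.dist_self
  · exact SimpleGraph.dist_eq_one_iff_adj.mpr (adj_iff.mpr ⟨h1, h2⟩)
  · obtain ⟨w, hxw, hwz⟩ := common_nbr x z h1 h2
    have hadj1 : petersenGraph.Adj x w := adj_iff.mpr ⟨ne_of_disjoint hxw, hxw⟩
    have hadj2 : petersenGraph.Adj w z :=
      adj_iff.mpr ⟨(ne_of_disjoint hwz.symm).symm, hwz⟩
    have hle : petersenGraph.dist x z ≤ 2 := by
      simpa using SimpleGraph.dist_le
        (SimpleGraph.Walk.cons hadj1 (SimpleGraph.Walk.cons hadj2 SimpleGraph.Walk.nil))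
    have h0 : petersenGraph.dist x z ≠ 0 := by
      intro h
      rcases SimpleGraph.dist_eq_zero_iff_eq_or_not_reachable.mp h with h' | h'
      · exact h1 h'
      · exact h' ⟨SimpleGraph.Walk.cons hadj1 (SimpleGraph.Walk.cons hadj2 SimpleGraph.Walk.nil)⟩
    have hne1 : petersenGraph.dist x z ≠ 1 := fun h =>
      h2 (adj_iff.mp (SimpleGraph.dist_eq_one_iff_adj.mp h)).2
    omega

lemma resSet_eq (x y : PV) :
    resSet petersenGraph x y = univ.filter (fun z => distP x z ≠ distP y z) := by
  unfold resSet
  simp only [dist_eq]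

lemma lower_bound {k : ℝ} (g : PV → ℝ) (hg : IsKResolving petersenGraph k g) :
    5 * k / 3 ≤ ∑ v, g v := by
  set P : Finset (PV × PV) := (univ ×ˢ univ).filter (fun p => p.1 ≠ p.2) with hP
  have h1 : (90 : ℝ) * k ≤ ∑ p ∈ P, ∑ z ∈ resSet petersenGraph p.1 p.2, g z := by
    calc (90 : ℝ) * k = ∑ _p ∈ P, k := by
          rw [Finset.sum_const, cardP, nsmul_eq_mul]; norm_num
      _ ≤ _ := Finset.sum_le_sum (fun p hp => by
          refine hg.2 p.1 p.2 ?_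
          simpa [hP] using (Finset.mem_filter.mp hp).2)
  have h2 : ∑ p ∈ P, ∑ z ∈ resSet petersenGraph p.1 p.2, g z = 54 * ∑ v, g v := by
    have hstep : ∀ p ∈ P, ∑ z ∈ resSet petersenGraph p.1 p.2, g z
        = ∑ z : PV, if distP p.1 z ≠ distP p.2 z then g z else 0 := by
      intro p _
      rw [resSet_eq, Finset.sum_filter]
    rw [Finset.sum_congr rfl hstep, Finset.sum_comm, Finset.mul_sum]
    refine Finset.sum_congr rfl (fun z _ => ?_)
    rw [← Finset.sum_filter]
    have hc : (P.filter (fun p => distP p.1 z ≠ distP p.2 z)).card = 54 := by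
      rw [hP, Finset.filter_filter]
      exact cardB z
    rw [Finset.sum_const, hc, nsmul_eq_mul]
    norm_num
  rw [h2] at h1
  linarith

end FracDim

open FracDim in
/-- For the Petersen graph `𝒫`: `κ(𝒫) = 6`, and for every real `k` with `1 ≤ k ≤ 6`,
`dim_f^k(𝒫) = 5k/3`. -/
theorem fracKDim_petersen :
    kappa petersenGraph = 6 ∧
      ∀ k : ℝ, 1 ≤ k → k ≤ 6 → fracKDim petersenGraph k = 5 * k / 3 := by
  have hcard6 : ∀ x y : PV, x ≠ y → (resSet petersenGraph x y).card = 6 := by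
    intro x y hxy
    rw [resSet_eq]
    exact cardA x y hxy
  constructor
  · -- kappa = 6
    have hset : {n : ℕ | ∃ x y : PV, x ≠ y ∧ (resSet petersenGraph x y).card = n} = {6} := by
      ext n
      constructor
      · rintro ⟨x, y, hxy, hc⟩
        have := hcard6 x y hxy
        simp only [Set.mem_singleton_iff]
        omega
      · rintro rfl
        refine ⟨⟨{0, 1}, by decide⟩, ⟨{0, 2}, by decide⟩, by decide, ?_⟩
        exact hcard6 _ _ (by decide)
    rw [kappa, hset]
    exact csInf_singleton 6
  · intro k hk1 hk6
    have hmem : (5 * k / 3) ∈ {s : ℝ | ∃ g : PV → ℝ,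
        IsKResolving petersenGraph k g ∧ s = ∑ v, g v} := by
      refine ⟨fun _ => k / 6, ⟨fun v => ⟨by linarith, by linarith⟩, ?_⟩, ?_⟩
      · intro x y hxy
        rw [Finset.sum_const, hcard6 x y hxy, nsmul_eq_mul]
        norm_num
        linarith
      · rw [Finset.sum_const, Finset.card_univ, cardV, nsmul_eq_mul]
        norm_num
        ring
    have hlb : ∀ s ∈ {s : ℝ | ∃ g : PV → ℝ,
        IsKResolving petersenGraph k g ∧ s = ∑ v, g v}, 5 * k / 3 ≤ s := by
      rintro s ⟨g, hg, rfl⟩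
      exact lower_bound g hg
    rw [fracKDim]
    exact le_antisymm (csInf_le ⟨5 * k / 3, hlb⟩ hmem) (le_csInf ⟨_, hmem⟩ hlb)
end

section
/- Let B_m (m ≥ 2) be a bouquet of m cycles C^1, C^2, …, C^m with a cut-vertex, i.e., the vertex sum of the m cycles at one common vertex, where C^1 has minimum length among the m cycles. Then κ(B_m) = |V(C^1)| − 1 if C^1 is an odd cycle and κ(B_m) = |V(C^1)| − 2 if C^1 is an even cycle, and for every real number k with 1 ≤ k ≤ κ(B_m), dim_f^k(B_m) = k·m. -/
open Finset

namespace FracDim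

/-- The bouquet of `m` cycles: cycle `i` has length `r i + 1` (`r i ≥ 2`), consisting of
the common cut-vertex (`none`) together with the path `(i,0), (i,1), …, (i, r i − 1)`;
the hub is adjacent to the two endpoints `(i,0)` and `(i, r i − 1)` of each path. -/
def bouquet (m : ℕ) (r : Fin m → ℕ) : SimpleGraph (Option (Σ i : Fin m, Fin (r i))) :=
  SimpleGraph.fromRel (fun a b =>
    (∃ (i : Fin m) (j : Fin (r i)), a = none ∧ b = some ⟨i, j⟩ ∧
        (j.val = 0 ∨ j.val = r i - 1)) ∨
      (∃ (i : Fin m) (j j' : Fin (r i)), a = some ⟨i, j⟩ ∧ b = some ⟨i, j'⟩ ∧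
        j.val + 1 = j'.val))

end FracDim

namespace FracDim

open SimpleGraph

variable {m : ℕ} {r : Fin m → ℕ}

lemma vEq (i : Fin m) {a b : ℕ} (ha : a < r i) (hb : b < r i) (h : a = b) :
    (some ⟨i, ⟨a, ha⟩⟩ : Option (Σ i : Fin m, Fin (r i))) = some ⟨i, ⟨b, hb⟩⟩ := by
  subst h; rfl

lemma vEq' (i : Fin m) {a : ℕ} (ha : a < r i) (j : Fin (r i)) (h : a = j.val) :
    (some ⟨i, ⟨a, ha⟩⟩ : Option (Σ i : Fin m, Fin (r i))) = some ⟨i, j⟩ := by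
  cases j; exact vEq i ha _ h

/-- distance from hub to vertex `j` of cycle `i`. -/
def d0 (r : Fin m → ℕ) (i : Fin m) (j : ℕ) : ℕ := min (j+1) (r i - j)

/-- candidate distance function -/
def D (r : Fin m → ℕ) : Option (Σ i : Fin m, Fin (r i)) → Option (Σ i : Fin m, Fin (r i)) → ℕ
  | none, none => 0
  | none, some ⟨i, j⟩ => d0 r i j
  | some ⟨i, j⟩, none => d0 r i j
  | some ⟨i, j⟩, some ⟨i', j'⟩ =>
      if i = i' then
        min ((j.1 - j'.1) + (j'.1 - j.1)) (r i + 1 - ((j.1 - j'.1) + (j'.1 - j.1)))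
      else d0 r i j + d0 r i' j'

@[simp] lemma D_none_none : D r (none) (none) = 0 := rfl
@[simp] lemma D_none_some (i : Fin m) (j : Fin (r i)) : D r none (some ⟨i, j⟩) = d0 r i j := rfl
@[simp] lemma D_some_none (i : Fin m) (j : Fin (r i)) : D r (some ⟨i, j⟩) none = d0 r i j := rfl
lemma D_some_same (i : Fin m) (j j' : Fin (r i)) :
    D r (some ⟨i, j⟩) (some ⟨i, j'⟩) =
      min ((j.1 - j'.1) + (j'.1 - j.1)) (r i + 1 - ((j.1 - j'.1) + (j'.1 - j.1))) := by
  simp [D]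
lemma D_some_diff {i i' : Fin m} (h : i ≠ i') (j : Fin (r i)) (j' : Fin (r i')) :
    D r (some ⟨i, j⟩) (some ⟨i', j'⟩) = d0 r i j + d0 r i' j' := by
  simp [D, h]

lemma adj_hub (i : Fin m) (j : Fin (r i)) (h : j.val = 0 ∨ j.val = r i - 1) :
    (bouquet m r).Adj none (some ⟨i, j⟩) := by
  rw [bouquet, SimpleGraph.fromRel_adj]
  exact ⟨by simp, Or.inl (Or.inl ⟨i, j, rfl, rfl, h⟩)⟩

lemma adj_step (i : Fin m) (j j' : Fin (r i)) (h : j.val + 1 = j'.val) :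
    (bouquet m r).Adj (some ⟨i, j⟩) (some ⟨i, j'⟩) := by
  rw [bouquet, SimpleGraph.fromRel_adj]
  refine ⟨?_, Or.inl (Or.inr ⟨i, j, j', rfl, rfl, h⟩)⟩
  simp only [ne_eq, Option.some.injEq]
  intro hc
  have : j.val = j'.val := by
    have := congrArg (fun s : (Σ i : Fin m, Fin (r i)) => s.2.1) hc
    simpa using this
  omega

/-- walk going up within a cycle -/
def walkUp (i : Fin m) : (n a : ℕ) → (ha : a < r i) → (hb : a + n < r i) →
    (bouquet m r).Walk (some ⟨i, ⟨a, ha⟩⟩) (some ⟨i, ⟨a + n, hb⟩⟩)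
  | 0, a, ha, hb => Walk.nil.copy (vEq i ha hb rfl) rfl
  | n+1, a, ha, hb =>
      (Walk.cons (adj_step i ⟨a, ha⟩ ⟨a+1, by omega⟩ rfl)
        ((walkUp i n (a+1) (by omega) (by omega)).copy rfl
          (vEq i (by omega) hb (by omega))))

@[simp] lemma walkUp_length (i : Fin m) (n a : ℕ) (ha : a < r i) (hb : a + n < r i) :
    (walkUp i n a ha hb : (bouquet m r).Walk _ _).length = n := by
  induction n generalizing a with
  | zero => simp [walkUp]
  | succ n ih => simp [walkUp, ih]

/-- a walk from the hub to any cycle vertex, of length `d0`. -/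
lemma exists_walk_hub (i : Fin m) (j : Fin (r i)) :
    ∃ w : (bouquet m r).Walk none (some ⟨i, j⟩), w.length = d0 r i j := by
  have hj := j.isLt
  by_cases h : j.val + 1 ≤ r i - j.val
  · refine ⟨Walk.cons (adj_hub i ⟨0, by omega⟩ (Or.inl rfl))
      ((walkUp i j.val 0 (by omega) (by omega)).copy rfl (vEq' i (by omega) j (by omega))), ?_⟩
    · simp [d0]; omega
  · refine ⟨Walk.cons (adj_hub i ⟨r i - 1, by omega⟩ (Or.inr rfl))
      (((walkUp i (r i - 1 - j.val) j.val j.isLt (by omega)).copy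
        (vEq' i j.isLt j rfl) (vEq i (by omega) (by omega) (by omega))).reverse), ?_⟩
    · simp [d0]; omega

end FracDim

namespace FracDim
open SimpleGraph
variable {m : ℕ} {r : Fin m → ℕ}

lemma exists_walk_hub_short (i : Fin m) (j : Fin (r i)) :
    ∃ w : (bouquet m r).Walk none (some ⟨i, j⟩), w.length = j.val + 1 := by
  have hj := j.isLt
  refine ⟨Walk.cons (adj_hub i ⟨0, by omega⟩ (Or.inl rfl))
    ((walkUp i j.val 0 (by omega) (by omega)).copy rfl (vEq' i (by omega) j (by omega))), ?_⟩
  simp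

lemma exists_walk_hub_long (i : Fin m) (j : Fin (r i)) :
    ∃ w : (bouquet m r).Walk none (some ⟨i, j⟩), w.length = r i - j.val := by
  have hj := j.isLt
  refine ⟨Walk.cons (adj_hub i ⟨r i - 1, by omega⟩ (Or.inr rfl))
    (((walkUp i (r i - 1 - j.val) j.val j.isLt (by omega)).copy
      (vEq' i j.isLt j rfl) (vEq i (by omega) (by omega) (by omega))).reverse), ?_⟩
  simp; omega

lemma reachable_hub (x : Option (Σ i : Fin m, Fin (r i))) :
    (bouquet m r).Reachable none x := by
  cases x with
  | none => exact Reachable.refl _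
  | some s =>
      obtain ⟨i, j⟩ := s
      obtain ⟨w, -⟩ := exists_walk_hub (r := r) i j
      exact ⟨w⟩

lemma bouquet_reachable (x y : Option (Σ i : Fin m, Fin (r i))) :
    (bouquet m r).Reachable x y :=
  (reachable_hub x).symm.trans (reachable_hub y)

lemma dist_le_D (x y : Option (Σ i : Fin m, Fin (r i))) :
    (bouquet m r).dist x y ≤ D r x y := by
  cases x with
  | none =>
      cases y with
      | none => simp
      | some s =>
          obtain ⟨i, j⟩ := s
          obtain ⟨w, hw⟩ := exists_walk_hub (r := r) i j
          simpa [hw] using SimpleGraph.dist_le w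
  | some s =>
      obtain ⟨i, j⟩ := s
      cases y with
      | none =>
          obtain ⟨w, hw⟩ := exists_walk_hub (r := r) i j
          simpa [hw] using SimpleGraph.dist_le w.reverse
      | some t =>
          obtain ⟨i', j'⟩ := t
          by_cases hii : i = i'
          · subst hii
            rw [D_some_same]
            have key : ∀ (a b : Fin (r i)), a.val ≤ b.val →
                (bouquet m r).dist (some ⟨i, a⟩) (some ⟨i, b⟩) ≤
                  min ((a.1 - b.1) + (b.1 - a.1)) (r i + 1 - ((a.1 - b.1) + (b.1 - a.1))) := by
              intro a b hab
              have hb := b.isLt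
              refine le_min ?_ ?_
              · have := SimpleGraph.dist_le ((walkUp i (b.val - a.val) a.val a.isLt
                  (by omega)).copy rfl (vEq' i (by omega) b (by omega)))
                simp only [Walk.length_copy, walkUp_length] at this
                exact this.trans (by omega)
              · obtain ⟨w1, hw1⟩ := exists_walk_hub_short (r := r) i a
                obtain ⟨w2, hw2⟩ := exists_walk_hub_long (r := r) i b
                have := SimpleGraph.dist_le (w1.reverse.append w2)
                simp [hw1, hw2] at this
                exact this.trans (by omega)
            rcases le_total j.val j'.val with h | h
            · exact key j j' h
            · have := key j' j h
              rw [SimpleGraph.dist_comm] at this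
              exact this.trans (le_of_eq (by omega))
          · rw [D_some_diff hii]
            obtain ⟨w1, hw1⟩ := exists_walk_hub (r := r) i j
            obtain ⟨w2, hw2⟩ := exists_walk_hub (r := r) i' j'
            have := SimpleGraph.dist_le (w1.reverse.append w2)
            simpa [hw1, hw2] using this

end FracDim

namespace FracDim
open SimpleGraph
variable {m : ℕ} {r : Fin m → ℕ}

lemma D_self (x : Option (Σ i : Fin m, Fin (r i))) : D r x x = 0 := by
  cases x with
  | none => rfl
  | some s => obtain ⟨i, j⟩ := s; rw [D_some_same]; omega

lemma D_step_hub (hr2 : ∀ i, 2 ≤ r i) (x : Option (Σ i : Fin m, Fin (r i)))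
    (i : Fin m) (j : Fin (r i)) (hj : j.val = 0 ∨ j.val = r i - 1) :
    D r x (some ⟨i, j⟩) ≤ D r x none + 1 ∧ D r x none ≤ D r x (some ⟨i, j⟩) + 1 := by
  have h2 := hr2 i
  have hlt := j.isLt
  cases x with
  | none => simp [d0]; omega
  | some s =>
      obtain ⟨i'', j''⟩ := s
      have hlt'' := j''.isLt
      by_cases hii : i'' = i
      · subst hii
        rw [D_some_same, D_some_none]
        simp only [d0]
        omega
      · rw [D_some_diff hii, D_some_none]
        simp only [d0]
        omega

lemma D_step_cyc (hr2 : ∀ i, 2 ≤ r i) (x : Option (Σ i : Fin m, Fin (r i)))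
    (i : Fin m) (j j' : Fin (r i)) (hj : j.val + 1 = j'.val) :
    D r x (some ⟨i, j'⟩) ≤ D r x (some ⟨i, j⟩) + 1 ∧
      D r x (some ⟨i, j⟩) ≤ D r x (some ⟨i, j'⟩) + 1 := by
  have h2 := hr2 i
  have hlt := j.isLt
  have hlt' := j'.isLt
  cases x with
  | none => simp [d0]; omega
  | some s =>
      obtain ⟨i'', j''⟩ := s
      have hlt'' := j''.isLt
      by_cases hii : i'' = i
      · subst hii
        rw [D_some_same, D_some_same]
        omega
      · rw [D_some_diff hii, D_some_diff hii]
        simp only [d0]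
        omega

lemma D_step (hr2 : ∀ i, 2 ≤ r i) (x a b : Option (Σ i : Fin m, Fin (r i)))
    (h : (bouquet m r).Adj a b) : D r x b ≤ D r x a + 1 := by
  rw [bouquet, SimpleGraph.fromRel_adj] at h
  obtain ⟨hne, h | h⟩ := h <;>
    rcases h with ⟨i, j, rfl, rfl, hj⟩ | ⟨i, j, j', rfl, rfl, hjj⟩
  · exact (D_step_hub hr2 x i j hj).1
  · exact (D_step_cyc hr2 x i j j' hjj).1
  · exact (D_step_hub hr2 x i j hj).2
  · exact (D_step_cyc hr2 x i j j' hjj).2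

lemma D_le_length (hr2 : ∀ i, 2 ≤ r i) (x : Option (Σ i : Fin m, Fin (r i)))
    {a y : Option (Σ i : Fin m, Fin (r i))} (w : (bouquet m r).Walk a y) :
    D r x y ≤ D r x a + w.length := by
  induction w with
  | nil => simp
  | @cons u v t h p ih =>
      have := D_step hr2 x u v h
      simp only [Walk.length_cons]
      omega

theorem bouquet_dist_eq (hr2 : ∀ i, 2 ≤ r i) (x y : Option (Σ i : Fin m, Fin (r i))) :
    (bouquet m r).dist x y = D r x y := by
  refine le_antisymm (dist_le_D x y) ?_
  obtain ⟨w, hw⟩ := (bouquet_reachable (r := r) x y).exists_walk_length_eq_dist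
  have := D_le_length hr2 x w
  rw [D_self] at this
  omega

end FracDim

namespace FracDim
open Finset SimpleGraph

variable {m : ℕ} {r : Fin m → ℕ}

lemma resSet_comm [Fintype V] (G : SimpleGraph V) (x y : V) :
    resSet G x y = resSet G y x := by
  ext z; simp only [resSet, mem_filter, mem_univ, true_and, ne_comm]

lemma mem_resSet (hr2 : ∀ i, 2 ≤ r i) {x y z : Option (Σ i : Fin m, Fin (r i))} :
    z ∈ resSet (bouquet m r) x y ↔ D r x z ≠ D r y z := by
  simp [resSet, bouquet_dist_eq hr2]

lemma some_inj (i : Fin m) : Function.Injective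
    (fun j : Fin (r i) => (some ⟨i, j⟩ : Option (Σ i : Fin m, Fin (r i)))) := by
  intro a b h
  have h1 : (⟨i, a⟩ : Σ i : Fin m, Fin (r i)) = ⟨i, b⟩ := Option.some_injective _ h
  simpa using h1

/-- counting: number of `j : Fin R` with `j.val < K`. -/
lemma card_filter_val_lt (R K : ℕ) :
    ((univ : Finset (Fin R)).filter (fun j => j.val < K)).card = min K R := by
  classical
  have he : (univ : Finset (Fin R)).filter (fun j => j.val < K) =
      (Finset.range (min K R)).attachFin
        (fun v hv => lt_of_lt_of_le (Finset.mem_range.1 hv) (min_le_right _ _)) := by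
    ext ⟨v, hv⟩
    simp only [mem_filter, mem_univ, true_and, Finset.mem_attachFin, Finset.mem_range]
    omega
  rw [he, Finset.card_attachFin, Finset.card_range]

lemma card_filter_ge {R : ℕ} (K : ℕ) (P : Fin R → Prop) [DecidablePred P]
    (h : ∀ v : ℕ, v < K → ∀ hv : v < R, P ⟨v, hv⟩) :
    min K R ≤ ((univ : Finset (Fin R)).filter P).card := by
  rw [← card_filter_val_lt R K]
  apply Finset.card_le_card
  apply Finset.monotone_filter_right
  intro j _ hj
  have := h j.val hj j.isLt
  simpa using this

lemma card_filter_ge_shift {R : ℕ} (K s : ℕ) (P : Fin R → Prop) [DecidablePred P]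
    (hKR : ∀ v, v < K → v + s < R)
    (h : ∀ v (hv : v < K), P ⟨v + s, hKR v hv⟩) :
    K ≤ ((univ : Finset (Fin R)).filter P).card := by
  classical
  have hmain := Finset.card_le_card_of_injOn
    (f := fun v : Fin K => (⟨v.val + s, hKR v v.isLt⟩ : Fin R))
    (s := (univ : Finset (Fin K))) (t := (univ : Finset (Fin R)).filter P)
    (fun v _ => by
      simp only [Finset.mem_coe, Finset.mem_filter, Finset.mem_univ, true_and]
      exact h v v.isLt)
    (fun v _ w _ hvw => by
      have : v.val + s = w.val + s := by
        have := congrArg Fin.val hvw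
        simpa using this
      exact Fin.ext (by omega))
  simpa using hmain

/-- counting: number of non-midpoint vertices. -/
lemma card_filter_ne_mid (R : ℕ) :
    ((univ : Finset (Fin R)).filter (fun j => ¬(2 * (j.val + 1) = R + 1))).card = R - R % 2 := by
  classical
  have key := Finset.card_filter_add_card_filter_not
    (s := (univ : Finset (Fin R))) (p := fun j : Fin R => 2 * (j.val + 1) = R + 1)
  have hcu : (univ : Finset (Fin R)).card = R := by simp
  rcases Nat.even_or_odd R with hR | hR
  · have h0 : ((univ : Finset (Fin R)).filter (fun j => 2 * (j.val + 1) = R + 1)) = ∅ := by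
      rw [Finset.filter_eq_empty_iff]
      intro j _
      obtain ⟨c, hc⟩ := hR
      omega
    rw [h0] at key
    simp only [Finset.card_empty] at key
    obtain ⟨c, hc⟩ := hR
    omega
  · obtain ⟨c, hc⟩ := hR
    have hcR : c < R := by omega
    have h1 : ((univ : Finset (Fin R)).filter (fun j => 2 * (j.val + 1) = R + 1)) = {⟨c, hcR⟩} := by
      ext ⟨v, hv⟩
      simp only [mem_filter, mem_univ, true_and, Finset.mem_singleton, Fin.mk.injEq]
      omega
    rw [h1] at key
    simp only [Finset.card_singleton] at key
    omega

end FracDim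

namespace FracDim
open Finset SimpleGraph
variable {m : ℕ} {r : Fin m → ℕ}

lemma exists_other (hm : 2 ≤ m) (i : Fin m) : ∃ i₁ : Fin m, i₁ ≠ i := by
  refine ⟨⟨if i.val = 0 then 1 else 0, by split <;> omega⟩, ?_⟩
  intro h
  rw [Fin.ext_iff] at h
  simp only at h
  split at h <;> omega

lemma hub_cycle_le_card (i₁ : Fin m) {s : Finset (Option (Σ i : Fin m, Fin (r i)))}
    (hhub : none ∈ s) (hcyc : ∀ j : Fin (r i₁), some ⟨i₁, j⟩ ∈ s) :
    r i₁ + 1 ≤ s.card := by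
  classical
  have hsub : insert none (image (fun j : Fin (r i₁) => (some ⟨i₁, j⟩ :
      Option (Σ i : Fin m, Fin (r i)))) univ) ⊆ s := by
    intro z hz
    rcases Finset.mem_insert.1 hz with rfl | hz
    · exact hhub
    · obtain ⟨j, -, rfl⟩ := Finset.mem_image.1 hz
      exact hcyc j
  have hcard : (insert none (image (fun j : Fin (r i₁) => (some ⟨i₁, j⟩ :
      Option (Σ i : Fin m, Fin (r i)))) univ)).card = r i₁ + 1 := by
    rw [Finset.card_insert_of_notMem (by simp), Finset.card_image_of_injective _ (some_inj i₁)]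
    simp
  calc r i₁ + 1 = _ := hcard.symm
    _ ≤ s.card := Finset.card_le_card hsub

lemma cycle_filter_le_card (i : Fin m) (P : Fin (r i) → Prop) [DecidablePred P]
    {s : Finset (Option (Σ i : Fin m, Fin (r i)))}
    (hs : ∀ j, P j → some ⟨i, j⟩ ∈ s) :
    ((univ : Finset (Fin (r i))).filter P).card ≤ s.card := by
  classical
  rw [← Finset.card_image_of_injective _ (some_inj i)]
  apply Finset.card_le_card
  intro z hz
  obtain ⟨j, hj, rfl⟩ := Finset.mem_image.1 hz
  exact hs j (Finset.mem_filter.1 hj).2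

lemma two_cycles_le_card {i i' : Fin m} (hii : i ≠ i') (P : Fin (r i) → Prop)
    (P' : Fin (r i') → Prop) [DecidablePred P] [DecidablePred P']
    {s : Finset (Option (Σ i : Fin m, Fin (r i)))}
    (hs : ∀ j, P j → some ⟨i, j⟩ ∈ s) (hs' : ∀ j, P' j → some ⟨i', j⟩ ∈ s) :
    ((univ : Finset (Fin (r i))).filter P).card +
      ((univ : Finset (Fin (r i'))).filter P').card ≤ s.card := by
  classical
  set A := image (fun j : Fin (r i) => (some ⟨i, j⟩ : Option (Σ i : Fin m, Fin (r i))))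
    ((univ : Finset (Fin (r i))).filter P) with hA
  set B := image (fun j : Fin (r i') => (some ⟨i', j⟩ : Option (Σ i : Fin m, Fin (r i))))
    ((univ : Finset (Fin (r i'))).filter P') with hB
  have hdisj : Disjoint A B := by
    rw [Finset.disjoint_left]
    intro z hzA hzB
    obtain ⟨j, -, rfl⟩ := Finset.mem_image.1 hzA
    obtain ⟨j', -, hj'⟩ := Finset.mem_image.1 hzB
    apply hii
    have := congrArg (fun o : Option (Σ i : Fin m, Fin (r i)) =>
      (Option.map Sigma.fst o)) hj'
    simpa using this.symm
  have hsub : A ∪ B ⊆ s := by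
    intro z hz
    rcases Finset.mem_union.1 hz with hz | hz
    · obtain ⟨j, hj, rfl⟩ := Finset.mem_image.1 hz
      exact hs j (Finset.mem_filter.1 hj).2
    · obtain ⟨j, hj, rfl⟩ := Finset.mem_image.1 hz
      exact hs' j (Finset.mem_filter.1 hj).2
  calc _ = A.card + B.card := by
        rw [hA, hB, Finset.card_image_of_injective _ (some_inj i),
          Finset.card_image_of_injective _ (some_inj i')]
    _ = (A ∪ B).card := (Finset.card_union_of_disjoint hdisj).symm
    _ ≤ s.card := Finset.card_le_card hsub

end FracDim

namespace FracDim
open Finset SimpleGraph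
variable {m : ℕ} {r : Fin m → ℕ}

lemma T_le_card_resSet (hm : 2 ≤ m) (hr2 : ∀ i, 2 ≤ r i) (i₀ : Fin m) (hmin : ∀ i, r i₀ ≤ r i)
    (x y : Option (Σ i : Fin m, Fin (r i))) (hxy : x ≠ y) :
    r i₀ - r i₀ % 2 ≤ (resSet (bouquet m r) x y).card := by
  classical
  have hr0 := hr2 i₀
  have hubcase : ∀ (i : Fin m) (b : Fin (r i)),
      r i₀ - r i₀ % 2 ≤ (resSet (bouquet m r) none (some ⟨i, b⟩)).card := by
    intro i b
    obtain ⟨i₁, hi₁⟩ := exists_other hm i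
    have hb := b.isLt
    have hri := hr2 i
    have h1 : none ∈ resSet (bouquet m r) none (some ⟨i, b⟩) := by
      rw [mem_resSet hr2]
      simp only [D_none_none, D_some_none, d0]
      omega
    have h2 : ∀ j : Fin (r i₁), some ⟨i₁, j⟩ ∈ resSet (bouquet m r) none (some ⟨i, b⟩) := by
      intro j
      have hj := j.isLt
      rw [mem_resSet hr2, D_none_some, D_some_diff (Ne.symm hi₁)]
      simp only [d0]
      omega
    have hc := hub_cycle_le_card i₁ h1 h2
    have := hmin i₁
    omega
  have cross : ∀ (i i' : Fin m), i ≠ i' → ∀ (a : Fin (r i)) (b : Fin (r i')),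
      d0 r i a < d0 r i' b →
      r i₀ - r i₀ % 2 ≤ (resSet (bouquet m r) (some ⟨i, a⟩) (some ⟨i', b⟩)).card := by
    intro i i' hii a b hd
    have ha := a.isLt
    have hb := b.isLt
    have h1 : none ∈ resSet (bouquet m r) (some ⟨i, a⟩) (some ⟨i', b⟩) := by
      rw [mem_resSet hr2]
      simp only [D_some_none]
      omega
    have h2 : ∀ j : Fin (r i), some ⟨i, j⟩ ∈ resSet (bouquet m r) (some ⟨i, a⟩) (some ⟨i', b⟩) := by
      intro j
      have hj := j.isLt
      rw [mem_resSet hr2, D_some_same, D_some_diff (Ne.symm hii)]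
      simp only [d0] at hd ⊢
      omega
    have hc := hub_cycle_le_card i h1 h2
    have := hmin i
    omega
  have onecycle : ∀ (i1 i2 : Fin m), i1 ≠ i2 → ∀ (a1 : Fin (r i1)) (a2 : Fin (r i2)),
      d0 r i1 a1 = d0 r i2 a2 →
      r i1 / 2 + 1 ≤ ((univ : Finset (Fin (r i1))).filter
        (fun j => some ⟨i1, j⟩ ∈ resSet (bouquet m r) (some ⟨i1, a1⟩) (some ⟨i2, a2⟩))).card := by
    intro i1 i2 h12 a1 a2 hd
    have ha1 := a1.isLt
    have ha2 := a2.isLt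
    have h2 := hr2 i1
    have h2' := hr2 i2
    by_cases hside : 2 * (a1.val + 1) ≤ r i1 + 1
    · refine card_filter_ge_shift (r i1 / 2 + 1) 0 _ (by omega) ?_
      intro v hv
      rw [mem_resSet hr2, D_some_same, D_some_diff (Ne.symm h12)]
      simp only [d0] at hd ⊢
      omega
    · refine card_filter_ge_shift (r i1 / 2 + 1) (r i1 - (r i1 / 2 + 1)) _ (by omega) ?_
      intro v hv
      rw [mem_resSet hr2, D_some_same, D_some_diff (Ne.symm h12)]
      simp only [d0] at hd ⊢
      omega
  have crosseq : ∀ (i i' : Fin m), i ≠ i' → ∀ (a : Fin (r i)) (b : Fin (r i')),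
      d0 r i a = d0 r i' b →
      r i₀ - r i₀ % 2 ≤ (resSet (bouquet m r) (some ⟨i, a⟩) (some ⟨i', b⟩)).card := by
    intro i i' hii a b hd
    have hone := onecycle i i' hii a b hd
    have hone' := onecycle i' i (Ne.symm hii) b a hd.symm
    rw [resSet_comm] at hone'
    have hcomb := two_cycles_le_card hii
      (fun j => some ⟨i, j⟩ ∈ resSet (bouquet m r) (some ⟨i, a⟩) (some ⟨i', b⟩))
      (fun j => some ⟨i', j⟩ ∈ resSet (bouquet m r) (some ⟨i, a⟩) (some ⟨i', b⟩))
      (fun _ h => h) (fun _ h => h)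
    have := hmin i
    have := hmin i'
    omega
  have symcase : ∀ (i : Fin m) (a b : Fin (r i)), a ≠ b → d0 r i a = d0 r i b →
      r i₀ - r i₀ % 2 ≤ (resSet (bouquet m r) (some ⟨i, a⟩) (some ⟨i, b⟩)).card := by
    intro i a b hab hd
    have ha := a.isLt
    have hb := b.isLt
    have h2 := hr2 i
    have hval : a.val ≠ b.val := fun h => hab (Fin.ext h)
    have hP : ∀ j : Fin (r i), ¬(2 * (j.val + 1) = r i + 1) →
        some ⟨i, j⟩ ∈ resSet (bouquet m r) (some ⟨i, a⟩) (some ⟨i, b⟩) := by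
      intro j hj
      have hjlt := j.isLt
      rw [mem_resSet hr2, D_some_same, D_some_same]
      simp only [d0] at hd
      omega
    have hc := cycle_filter_le_card i _ hP
    rw [card_filter_ne_mid] at hc
    have := hmin i
    omega
  have samediff : ∀ (i : Fin m) (a b : Fin (r i)), d0 r i a ≠ d0 r i b →
      r i₀ - r i₀ % 2 ≤ (resSet (bouquet m r) (some ⟨i, a⟩) (some ⟨i, b⟩)).card := by
    intro i a b hd
    obtain ⟨i₁, hi₁⟩ := exists_other hm i
    have h1 : none ∈ resSet (bouquet m r) (some ⟨i, a⟩) (some ⟨i, b⟩) := by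
      rw [mem_resSet hr2]
      simpa using hd
    have h2 : ∀ j : Fin (r i₁), some ⟨i₁, j⟩ ∈ resSet (bouquet m r)
        (some ⟨i, a⟩) (some ⟨i, b⟩) := by
      intro j
      rw [mem_resSet hr2, D_some_diff (Ne.symm hi₁), D_some_diff (Ne.symm hi₁)]
      omega
    have hc := hub_cycle_le_card i₁ h1 h2
    have := hmin i₁
    omega
  rcases x with _ | ⟨i, a⟩ <;> rcases y with _ | ⟨i', b⟩
  · exact absurd rfl hxy
  · exact hubcase i' b
  · rw [resSet_comm]
    exact hubcase i a
  · by_cases hii : i = i'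
    · subst hii
      by_cases hd : d0 r i a = d0 r i b
      · have hab : a ≠ b := by
          intro h
          exact hxy (by rw [h])
        exact symcase i a b hab hd
      · exact samediff i a b hd
    · rcases lt_trichotomy (d0 r i a) (d0 r i' b) with h | h | h
      · exact cross i i' hii a b h
      · exact crosseq i i' hii a b h
      · rw [resSet_comm]
        exact cross i' i (Ne.symm hii) b a h

end FracDim

namespace FracDim
open Finset SimpleGraph
variable {m : ℕ} {r : Fin m → ℕ}

lemma resSet_witness (hr2 : ∀ i, 2 ≤ r i) (i : Fin m) (a0 aR : Fin (r i))
    (h0 : a0.val = 0) (hR : aR.val = r i - 1) :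
    resSet (bouquet m r) (some ⟨i, a0⟩) (some ⟨i, aR⟩) =
      image (fun j => (some ⟨i, j⟩ : Option (Σ i : Fin m, Fin (r i))))
        ((univ : Finset (Fin (r i))).filter (fun j => ¬(2 * (j.val + 1) = r i + 1))) := by
  classical
  have h2 := hr2 i
  ext z
  rw [mem_resSet hr2]
  rcases z with _ | ⟨i', j⟩
  · simp only [D_some_none, d0, Finset.mem_image]
    constructor
    · intro h
      exfalso
      apply h
      omega
    · rintro ⟨a, -, h⟩
      exact absurd h (by simp)
  · by_cases hii : i' = i
    · subst hii
      rw [D_some_same, D_some_same]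
      simp only [Finset.mem_image, Finset.mem_filter, Finset.mem_univ, true_and]
      have hj := j.isLt
      constructor
      · intro h
        refine ⟨j, fun hc => h ?_, rfl⟩
        omega
      · rintro ⟨a, haP, haeq⟩
        have ha : a = j := some_inj i' haeq
        subst ha
        omega
    · rw [D_some_diff (fun h => hii h.symm), D_some_diff (fun h => hii h.symm)]
      simp only [d0, Finset.mem_image, Finset.mem_filter, Finset.mem_univ, true_and]
      constructor
      · intro h
        exfalso
        apply h
        omega
      · rintro ⟨a, -, h⟩
        have : i = i' := by
          have := congrArg (fun o : Option (Σ i : Fin m, Fin (r i)) =>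
            Option.map Sigma.fst o) h
          simpa using this
        exact absurd this (fun hh => hii hh.symm)

lemma kappa_bouquet (hm : 2 ≤ m) (hr2 : ∀ i, 2 ≤ r i) (i₀ : Fin m) (hmin : ∀ i, r i₀ ≤ r i) :
    kappa (bouquet m r) = r i₀ - r i₀ % 2 := by
  classical
  have h0 := hr2 i₀
  set a0 : Fin (r i₀) := ⟨0, by omega⟩ with ha0
  set aR : Fin (r i₀) := ⟨r i₀ - 1, by omega⟩ with haR
  have hv0 : a0.val = 0 := rfl
  have hvR : aR.val = r i₀ - 1 := rfl
  have hne : (some ⟨i₀, a0⟩ : Option (Σ i : Fin m, Fin (r i))) ≠ some ⟨i₀, aR⟩ := by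
    intro h
    have := congrArg Fin.val (some_inj i₀ h)
    rw [hv0, hvR] at this
    omega
  have hwit : (resSet (bouquet m r) (some ⟨i₀, a0⟩) (some ⟨i₀, aR⟩)).card =
      r i₀ - r i₀ % 2 := by
    rw [resSet_witness hr2 i₀ a0 aR hv0 hvR,
      Finset.card_image_of_injective _ (some_inj i₀), card_filter_ne_mid]
  have hmem : (r i₀ - r i₀ % 2) ∈ {n : ℕ | ∃ x y : Option (Σ i : Fin m, Fin (r i)),
      x ≠ y ∧ (resSet (bouquet m r) x y).card = n} := ⟨_, _, hne, hwit⟩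
  apply le_antisymm
  · exact Nat.sInf_le hmem
  · apply le_csInf ⟨_, hmem⟩
    rintro n ⟨x, y, hxy, rfl⟩
    exact T_le_card_resSet hm hr2 i₀ hmin x y hxy

end FracDim

namespace FracDim
open Finset SimpleGraph
variable {m : ℕ} {r : Fin m → ℕ}

/-- The optimal resolving function. -/
noncomputable def gf (k : ℝ) (r : Fin m → ℕ) : Option (Σ i : Fin m, Fin (r i)) → ℝ :=
  fun z => match z with
  | none => 0
  | some ⟨i, j⟩ => if 2 * (j.val + 1) = r i + 1 then 0 else k / ((r i - r i % 2 : ℕ) : ℝ)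

lemma gf_nonneg (hk : 0 ≤ k) (z : Option (Σ i : Fin m, Fin (r i))) : 0 ≤ gf k r z := by
  rcases z with _ | ⟨i, j⟩
  · exact le_refl 0
  · simp only [gf]
    split
    · exact le_refl 0
    · positivity

lemma gf_le_one (hk0 : 0 ≤ k) (hk : ∀ i, k ≤ ((r i - r i % 2 : ℕ) : ℝ)) (hr2 : ∀ i, 2 ≤ r i)
    (z : Option (Σ i : Fin m, Fin (r i))) : gf k r z ≤ 1 := by
  rcases z with _ | ⟨i, j⟩
  · exact zero_le_one
  · simp only [gf]
    split
    · exact zero_le_one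
    · have h2 := hr2 i
      have hpos : (0 : ℝ) < ((r i - r i % 2 : ℕ) : ℝ) := by
        have : 1 ≤ r i - r i % 2 := by omega
        exact_mod_cast Nat.lt_of_lt_of_le Nat.zero_lt_one this
      rw [div_le_one hpos]
      exact hk i

/-- sum of `gf` over a subset of a cycle. -/
lemma sum_gf_subset (k : ℝ) (i : Fin m) (s : Finset (Fin (r i))) :
    ∑ j ∈ s, gf k r (some ⟨i, j⟩) =
      ((s.filter (fun j => ¬(2 * (j.val + 1) = r i + 1))).card : ℝ) *
        (k / ((r i - r i % 2 : ℕ) : ℝ)) := by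
  classical
  rw [← Finset.sum_filter_add_sum_filter_not s (fun j => 2 * (j.val + 1) = r i + 1)]
  have h1 : ∑ j ∈ s.filter (fun j => 2 * (j.val + 1) = r i + 1), gf k r (some ⟨i, j⟩) = 0 := by
    apply Finset.sum_eq_zero
    intro j hj
    simp only [Finset.mem_filter] at hj
    simp only [gf, if_pos hj.2]
  have h2 : ∑ j ∈ s.filter (fun j => ¬(2 * (j.val + 1) = r i + 1)), gf k r (some ⟨i, j⟩) =
      ((s.filter (fun j => ¬(2 * (j.val + 1) = r i + 1))).card : ℝ) *
        (k / ((r i - r i % 2 : ℕ) : ℝ)) := by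
    rw [Finset.sum_congr rfl (fun j hj => ?_), Finset.sum_const, nsmul_eq_mul]
    simp only [Finset.mem_filter] at hj
    simp only [gf, if_neg hj.2]
  rw [h1, h2, zero_add]

lemma sum_gf_cycle (k : ℝ) (hr2 : ∀ i, 2 ≤ r i) (i : Fin m) :
    ∑ j : Fin (r i), gf k r (some ⟨i, j⟩) = k := by
  classical
  rw [sum_gf_subset, card_filter_ne_mid]
  have h2 := hr2 i
  have hne : ((r i - r i % 2 : ℕ) : ℝ) ≠ 0 := by
    have : 1 ≤ r i - r i % 2 := by omega
    positivity
  field_simp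

lemma sum_one_cycle_le (i : Fin m) (s : Finset (Fin (r i)))
    {t : Finset (Option (Σ i : Fin m, Fin (r i)))} (hs : ∀ j ∈ s, some ⟨i, j⟩ ∈ t)
    (g : Option (Σ i : Fin m, Fin (r i)) → ℝ) (hg : ∀ z, 0 ≤ g z) :
    ∑ j ∈ s, g (some ⟨i, j⟩) ≤ ∑ z ∈ t, g z := by
  classical
  have e1 : ∑ j ∈ s, g (some ⟨i, j⟩) = ∑ z ∈ image (fun j : Fin (r i) =>
      (some ⟨i, j⟩ : Option (Σ i : Fin m, Fin (r i)))) s, g z :=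
    (Finset.sum_image (fun x _ y _ h => some_inj i h)).symm
  rw [e1]
  apply Finset.sum_le_sum_of_subset_of_nonneg
  · intro z hz
    obtain ⟨j, hj, rfl⟩ := Finset.mem_image.1 hz
    exact hs j hj
  · intro z _ _
    exact hg z

lemma sum_two_cycles_le {i i' : Fin m} (hii : i ≠ i') (s : Finset (Fin (r i)))
    (s' : Finset (Fin (r i'))) {t : Finset (Option (Σ i : Fin m, Fin (r i)))}
    (hs : ∀ j ∈ s, some ⟨i, j⟩ ∈ t) (hs' : ∀ j ∈ s', some ⟨i', j⟩ ∈ t)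
    (g : Option (Σ i : Fin m, Fin (r i)) → ℝ) (hg : ∀ z, 0 ≤ g z) :
    ∑ j ∈ s, g (some ⟨i, j⟩) + ∑ j ∈ s', g (some ⟨i', j⟩) ≤ ∑ z ∈ t, g z := by
  classical
  set A := image (fun j : Fin (r i) => (some ⟨i, j⟩ : Option (Σ i : Fin m, Fin (r i)))) s with hA
  set B := image (fun j : Fin (r i') => (some ⟨i', j⟩ : Option (Σ i : Fin m, Fin (r i)))) s'
    with hB
  have hdisj : Disjoint A B := by
    rw [Finset.disjoint_left]
    intro z hzA hzB
    obtain ⟨j, -, rfl⟩ := Finset.mem_image.1 hzA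
    obtain ⟨j', -, hj'⟩ := Finset.mem_image.1 hzB
    apply hii
    have := congrArg (fun o : Option (Σ i : Fin m, Fin (r i)) => Option.map Sigma.fst o) hj'
    simpa using this.symm
  have e1 : ∑ j ∈ s, g (some ⟨i, j⟩) = ∑ z ∈ A, g z :=
    (Finset.sum_image (fun x _ y _ h => some_inj i h)).symm
  have e2 : ∑ j ∈ s', g (some ⟨i', j⟩) = ∑ z ∈ B, g z :=
    (Finset.sum_image (fun x _ y _ h => some_inj i' h)).symm
  rw [e1, e2, ← Finset.sum_union hdisj]
  apply Finset.sum_le_sum_of_subset_of_nonneg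
  · intro z hz
    rcases Finset.mem_union.1 hz with hz | hz
    · obtain ⟨j, hj, rfl⟩ := Finset.mem_image.1 hz
      exact hs j hj
    · obtain ⟨j, hj, rfl⟩ := Finset.mem_image.1 hz
      exact hs' j hj
  · intro z _ _
    exact hg z

lemma sum_gf_total (k : ℝ) (hr2 : ∀ i, 2 ≤ r i) :
    ∑ v : Option (Σ i : Fin m, Fin (r i)), gf k r v = k * m := by
  rw [Fintype.sum_option]
  have hsig := Finset.sum_sigma (univ : Finset (Fin m)) (fun i => (univ : Finset (Fin (r i))))
    (fun s => gf k r (some s))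
  rw [Finset.univ_sigma_univ] at hsig
  rw [hsig]
  have : ∀ i : Fin m, ∑ j : Fin (r i), gf k r (some ⟨i, j⟩) = k :=
    fun i => sum_gf_cycle k hr2 i
  rw [Finset.sum_congr rfl (fun i _ => this i), Finset.sum_const]
  simp [gf, mul_comm]

end FracDim

namespace FracDim
open Finset SimpleGraph
variable {m : ℕ} {r : Fin m → ℕ}

lemma gf_resolving (hm : 2 ≤ m) (hr2 : ∀ i, 2 ≤ r i) (i₀ : Fin m) (hmin : ∀ i, r i₀ ≤ r i)
    (k : ℝ) (hk1 : 1 ≤ k) (hkT : k ≤ ((r i₀ - r i₀ % 2 : ℕ) : ℝ)) :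
    IsKResolving (bouquet m r) k (gf k r) := by
  classical
  have hk0 : (0 : ℝ) ≤ k := by linarith
  have hg0 : ∀ z, 0 ≤ gf k r z := gf_nonneg hk0
  constructor
  · intro v
    refine ⟨hg0 v, gf_le_one hk0 (fun i => hkT.trans ?_) hr2 v⟩
    have h1 := hmin i
    have h0 := hr2 i₀
    exact Nat.cast_le.mpr (by omega)
  · have hubcase : ∀ (i : Fin m) (b : Fin (r i)),
        k ≤ ∑ z ∈ resSet (bouquet m r) none (some ⟨i, b⟩), gf k r z := by
      intro i b
      obtain ⟨i₁, hi₁⟩ := exists_other hm i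
      have hmem : ∀ j : Fin (r i₁), j ∈ (univ : Finset (Fin (r i₁))) →
          some ⟨i₁, j⟩ ∈ resSet (bouquet m r) none (some ⟨i, b⟩) := by
        intro j _
        have hj := j.isLt
        have hb := b.isLt
        have h2 := hr2 i
        rw [mem_resSet hr2, D_none_some, D_some_diff (Ne.symm hi₁)]
        simp only [d0]
        omega
      calc k = ∑ j : Fin (r i₁), gf k r (some ⟨i₁, j⟩) := (sum_gf_cycle k hr2 i₁).symm
        _ ≤ _ := sum_one_cycle_le i₁ univ hmem (gf k r) hg0
    have samediff : ∀ (i : Fin m) (a b : Fin (r i)), d0 r i a ≠ d0 r i b →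
        k ≤ ∑ z ∈ resSet (bouquet m r) (some ⟨i, a⟩) (some ⟨i, b⟩), gf k r z := by
      intro i a b hd
      obtain ⟨i₁, hi₁⟩ := exists_other hm i
      have hmem : ∀ j : Fin (r i₁), j ∈ (univ : Finset (Fin (r i₁))) →
          some ⟨i₁, j⟩ ∈ resSet (bouquet m r) (some ⟨i, a⟩) (some ⟨i, b⟩) := by
        intro j _
        rw [mem_resSet hr2, D_some_diff (Ne.symm hi₁), D_some_diff (Ne.symm hi₁)]
        omega
      calc k = ∑ j : Fin (r i₁), gf k r (some ⟨i₁, j⟩) := (sum_gf_cycle k hr2 i₁).symm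
        _ ≤ _ := sum_one_cycle_le i₁ univ hmem (gf k r) hg0
    have symcase : ∀ (i : Fin m) (a b : Fin (r i)), a.val ≠ b.val → d0 r i a = d0 r i b →
        k ≤ ∑ z ∈ resSet (bouquet m r) (some ⟨i, a⟩) (some ⟨i, b⟩), gf k r z := by
      intro i a b hval hd
      have ha := a.isLt
      have hb := b.isLt
      have h2 := hr2 i
      have hmem : ∀ j ∈ (univ : Finset (Fin (r i))).filter
          (fun j => ¬(2 * (j.val + 1) = r i + 1)),
          some ⟨i, j⟩ ∈ resSet (bouquet m r) (some ⟨i, a⟩) (some ⟨i, b⟩) := by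
        intro j hj
        rw [Finset.mem_filter] at hj
        have hjlt := j.isLt
        have hjP := hj.2
        rw [mem_resSet hr2, D_some_same, D_some_same]
        simp only [d0] at hd
        omega
      have hsum : ∑ j ∈ (univ : Finset (Fin (r i))).filter
          (fun j => ¬(2 * (j.val + 1) = r i + 1)), gf k r (some ⟨i, j⟩) = k := by
        rw [Finset.sum_subset (Finset.filter_subset _ _)]
        · exact sum_gf_cycle k hr2 i
        · intro j _ hj
          simp only [Finset.mem_filter, Finset.mem_univ, true_and, not_not] at hj
          simp only [gf, if_pos hj]
      calc k = _ := hsum.symm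
        _ ≤ _ := sum_one_cycle_le i _ hmem (gf k r) hg0
    have cross : ∀ (i i' : Fin m), i ≠ i' → ∀ (a : Fin (r i)) (b : Fin (r i')),
        d0 r i a < d0 r i' b →
        k ≤ ∑ z ∈ resSet (bouquet m r) (some ⟨i, a⟩) (some ⟨i', b⟩), gf k r z := by
      intro i i' hii a b hd
      have hmem : ∀ j : Fin (r i), j ∈ (univ : Finset (Fin (r i))) →
          some ⟨i, j⟩ ∈ resSet (bouquet m r) (some ⟨i, a⟩) (some ⟨i', b⟩) := by
        intro j _
        have hj := j.isLt
        have ha := a.isLt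
        rw [mem_resSet hr2, D_some_same, D_some_diff (Ne.symm hii)]
        simp only [d0] at hd ⊢
        omega
      calc k = ∑ j : Fin (r i), gf k r (some ⟨i, j⟩) := (sum_gf_cycle k hr2 i).symm
        _ ≤ _ := sum_one_cycle_le i univ hmem (gf k r) hg0
    have onecycS : ∀ (i1 i2 : Fin m), i1 ≠ i2 → ∀ (a1 : Fin (r i1)) (a2 : Fin (r i2)),
        d0 r i1 a1 = d0 r i2 a2 →
        k / 2 ≤ ∑ j ∈ (univ : Finset (Fin (r i1))).filter
          (fun j => some ⟨i1, j⟩ ∈ resSet (bouquet m r) (some ⟨i1, a1⟩) (some ⟨i2, a2⟩)),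
          gf k r (some ⟨i1, j⟩) := by
      intro i1 i2 h12 a1 a2 hd
      have ha1 := a1.isLt
      have ha2 := a2.isLt
      have h2 := hr2 i1
      have h2' := hr2 i2
      rw [sum_gf_subset]
      have hcard : r i1 / 2 ≤ (((univ : Finset (Fin (r i1))).filter
          (fun j => some ⟨i1, j⟩ ∈ resSet (bouquet m r) (some ⟨i1, a1⟩)
            (some ⟨i2, a2⟩))).filter (fun j => ¬(2 * (j.val + 1) = r i1 + 1))).card := by
        rw [Finset.filter_filter]
        by_cases hside : 2 * (a1.val + 1) ≤ r i1 + 1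
        · refine card_filter_ge_shift (r i1 / 2) 0 _ (by omega) ?_
          intro v hv
          constructor
          · rw [mem_resSet hr2, D_some_same, D_some_diff (Ne.symm h12)]
            simp only [d0] at hd ⊢
            omega
          · simp only [Fin.val_mk]
            omega
        · refine card_filter_ge_shift (r i1 / 2) (r i1 - r i1 / 2) _ (by omega) ?_
          intro v hv
          constructor
          · rw [mem_resSet hr2, D_some_same, D_some_diff (Ne.symm h12)]
            simp only [d0] at hd ⊢
            omega
          · simp only [Fin.val_mk]
            omega
      have hcast : ((r i1 - r i1 % 2 : ℕ) : ℝ) = 2 * ((r i1 / 2 : ℕ) : ℝ) := by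
        exact_mod_cast congrArg (Nat.cast : ℕ → ℝ) (by omega : r i1 - r i1 % 2 = 2 * (r i1 / 2))
      have hpos : (0 : ℝ) < ((r i1 / 2 : ℕ) : ℝ) := by
        have : 1 ≤ r i1 / 2 := by omega
        exact_mod_cast this
      have hhalf : ((r i1 / 2 : ℕ) : ℝ) * (k / ((r i1 - r i1 % 2 : ℕ) : ℝ)) = k / 2 := by
        rw [hcast]
        field_simp
      calc k / 2 = ((r i1 / 2 : ℕ) : ℝ) * (k / ((r i1 - r i1 % 2 : ℕ) : ℝ)) := hhalf.symm
        _ ≤ _ := by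
            apply mul_le_mul_of_nonneg_right
            · exact_mod_cast hcard
            · positivity
    have crosseq : ∀ (i i' : Fin m), i ≠ i' → ∀ (a : Fin (r i)) (b : Fin (r i')),
        d0 r i a = d0 r i' b →
        k ≤ ∑ z ∈ resSet (bouquet m r) (some ⟨i, a⟩) (some ⟨i', b⟩), gf k r z := by
      intro i i' hii a b hd
      have h1 := onecycS i i' hii a b hd
      have h2 := onecycS i' i (Ne.symm hii) b a hd.symm
      rw [resSet_comm] at h2
      have hcomb := sum_two_cycles_le hii
        ((univ : Finset (Fin (r i))).filter
          (fun j => some ⟨i, j⟩ ∈ resSet (bouquet m r) (some ⟨i, a⟩) (some ⟨i', b⟩)))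
        ((univ : Finset (Fin (r i'))).filter
          (fun j => some ⟨i', j⟩ ∈ resSet (bouquet m r) (some ⟨i, a⟩) (some ⟨i', b⟩)))
        (fun j hj => (Finset.mem_filter.1 hj).2)
        (fun j hj => (Finset.mem_filter.1 hj).2) (gf k r) hg0
      linarith
    intro x y hxy
    rcases x with _ | ⟨i, a⟩ <;> rcases y with _ | ⟨i', b⟩
    · exact absurd rfl hxy
    · exact hubcase i' b
    · rw [resSet_comm]
      exact hubcase i a
    · by_cases hii : i = i'
      · subst hii
        by_cases hd : d0 r i a = d0 r i b
        · have hab : a.val ≠ b.val := by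
            intro h
            exact hxy (by rw [Fin.ext h])
          exact symcase i a b hab hd
        · exact samediff i a b hd
      · rcases lt_trichotomy (d0 r i a) (d0 r i' b) with h | h | h
        · exact cross i i' hii a b h
        · exact crosseq i i' hii a b h
        · rw [resSet_comm]
          exact cross i' i (Ne.symm hii) b a h

end FracDim

namespace FracDim
open Finset SimpleGraph
variable {m : ℕ} {r : Fin m → ℕ}

lemma total_ge (hr2 : ∀ i, 2 ≤ r i) {k : ℝ} {g : Option (Σ i : Fin m, Fin (r i)) → ℝ}
    (hg : IsKResolving (bouquet m r) k g) : k * m ≤ ∑ v, g v := by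
  classical
  have hg0 : ∀ z, 0 ≤ g z := fun z => (hg.1 z).1
  have key : ∀ i : Fin m, k ≤ ∑ j : Fin (r i), g (some ⟨i, j⟩) := by
    intro i
    have h2 := hr2 i
    set a0 : Fin (r i) := ⟨0, by omega⟩ with ha0
    set aR : Fin (r i) := ⟨r i - 1, by omega⟩ with haR
    have hv0 : a0.val = 0 := rfl
    have hvR : aR.val = r i - 1 := rfl
    have hne : (some ⟨i, a0⟩ : Option (Σ i : Fin m, Fin (r i))) ≠ some ⟨i, aR⟩ := by
      intro h
      have := congrArg Fin.val (some_inj i h)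
      rw [hv0, hvR] at this
      omega
    have hres := hg.2 _ _ hne
    refine hres.trans ?_
    have hmem : ∀ z ∈ resSet (bouquet m r) (some ⟨i, a0⟩) (some ⟨i, aR⟩),
        z ∈ image (fun j : Fin (r i) => (some ⟨i, j⟩ : Option (Σ i : Fin m, Fin (r i)))) univ := by
      intro z hz
      rw [mem_resSet hr2] at hz
      rcases z with _ | ⟨i'', j⟩
      · exfalso
        apply hz
        simp only [D_some_none, d0, hv0, hvR]
        omega
      · by_cases hii : i'' = i
        · subst hii
          exact Finset.mem_image_of_mem _ (Finset.mem_univ j)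
        · exfalso
          apply hz
          rw [D_some_diff (fun h => hii h.symm), D_some_diff (fun h => hii h.symm)]
          simp only [d0, hv0, hvR]
          omega
    have e1 : ∑ z ∈ image (fun j : Fin (r i) =>
        (some ⟨i, j⟩ : Option (Σ i : Fin m, Fin (r i)))) univ, g z =
        ∑ j : Fin (r i), g (some ⟨i, j⟩) :=
      Finset.sum_image (fun x _ y _ h => some_inj i h)
    rw [← e1]
    exact Finset.sum_le_sum_of_subset_of_nonneg hmem (fun z _ _ => hg0 z)
  rw [Fintype.sum_option]
  have hsig := Finset.sum_sigma (univ : Finset (Fin m)) (fun i => (univ : Finset (Fin (r i))))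
    (fun s => g (some s))
  rw [Finset.univ_sigma_univ] at hsig
  rw [hsig]
  have h1 : k * m ≤ ∑ i : Fin m, ∑ j : Fin (r i), g (some ⟨i, j⟩) := by
    calc k * m = ∑ _i : Fin m, k := by simp [mul_comm]
      _ ≤ _ := Finset.sum_le_sum (fun i _ => key i)
  have h2 : 0 ≤ g none := hg0 none
  linarith

lemma fracKDim_eq (hm : 2 ≤ m) (hr2 : ∀ i, 2 ≤ r i) (i₀ : Fin m) (hmin : ∀ i, r i₀ ≤ r i)
    (k : ℝ) (hk1 : 1 ≤ k) (hkT : k ≤ ((r i₀ - r i₀ % 2 : ℕ) : ℝ)) :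
    fracKDim (bouquet m r) k = k * m := by
  have hmem : (k * m) ∈ {s : ℝ | ∃ g : Option (Σ i : Fin m, Fin (r i)) → ℝ,
      IsKResolving (bouquet m r) k g ∧ s = ∑ v, g v} :=
    ⟨gf k r, gf_resolving hm hr2 i₀ hmin k hk1 hkT, (sum_gf_total k hr2).symm⟩
  have hlb : ∀ s ∈ {s : ℝ | ∃ g : Option (Σ i : Fin m, Fin (r i)) → ℝ,
      IsKResolving (bouquet m r) k g ∧ s = ∑ v, g v}, k * m ≤ s := by
    rintro s ⟨g, hg, rfl⟩
    exact total_ge hr2 hg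
  exact le_antisymm (csInf_le ⟨k * m, hlb⟩ hmem) (le_csInf ⟨_, hmem⟩ hlb)

end FracDim


open FracDim in
/-- For a bouquet `B_m` (`m ≥ 2`) of `m` cycles at a common cut-vertex, where cycle `i`
has `r i + 1` vertices (`r i ≥ 2`) and cycle `i₀` has minimum length:
`κ(B_m) = |V(C^{i₀})| − 1` if `C^{i₀}` is odd, `κ(B_m) = |V(C^{i₀})| − 2` if `C^{i₀}` is
even, and `dim_f^k(B_m) = k·m` for every real `k` with `1 ≤ k ≤ κ(B_m)`. -/
theorem fracKDim_bouquet (m : ℕ) (hm : 2 ≤ m) (r : Fin m → ℕ) (hr : ∀ i, 2 ≤ r i)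
    (i₀ : Fin m) (hmin : ∀ i, r i₀ ≤ r i) :
    (Odd (r i₀ + 1) → kappa (bouquet m r) = (r i₀ + 1) - 1) ∧
      (Even (r i₀ + 1) → kappa (bouquet m r) = (r i₀ + 1) - 2) ∧
      ∀ k : ℝ, 1 ≤ k → k ≤ (kappa (bouquet m r) : ℝ) →
        fracKDim (bouquet m r) k = k * (m : ℝ) := by
  have hk := kappa_bouquet hm hr i₀ hmin
  refine ⟨?_, ?_, ?_⟩
  · intro hodd
    rw [Nat.odd_iff] at hodd
    rw [hk]
    omega
  · intro heven
    rw [Nat.even_iff] at heven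
    rw [hk]
    omega
  · intro k hk1 hkT
    rw [hk] at hkT
    exact fracKDim_eq hm hr i₀ hmin k hk1 hkT
end

section
/- For m ≥ 2, let K_{a_1,a_2,…,a_m} be the complete m-partite graph of order n = a_1 + a_2 + … + a_m (each a_i ≥ 1, n ≥ 2). Then κ(K_{a_1,…,a_m}) = 2, and for every real number k with 1 ≤ k ≤ 2: dim_f^k(K_{a_1,…,a_m}) = k(n−1)/2 if a_i = 1 for exactly one index i ∈ {1,…,m}, and dim_f^k(K_{a_1,…,a_m}) = kn/2 otherwise. -/
open Finset

namespace FracDimAux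

open FracDim SimpleGraph

lemma fracKDim_eq {V : Type*} [Fintype V] {G : SimpleGraph V} {k t : ℝ}
    (hmem : ∃ g : V → ℝ, IsKResolving G k g ∧ t = ∑ v, g v)
    (hlb : ∀ g : V → ℝ, IsKResolving G k g → t ≤ ∑ v, g v) :
    fracKDim G k = t := by
  obtain ⟨g0, hg0, hs⟩ := hmem
  apply le_antisymm
  · exact csInf_le ⟨t, by rintro s ⟨g, hg, rfl⟩; exact hlb g hg⟩ ⟨g0, hg0, hs⟩
  · exact le_csInf ⟨t, g0, hg0, hs⟩ (by rintro s ⟨g, hg, rfl⟩; exact hlb g hg)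

lemma pair_sum_bound {α : Type*} [DecidableEq α] {T : Finset α} (hT : 2 ≤ T.card)
    {P : α → ℝ} {k : ℝ} (h : ∀ i ∈ T, ∀ j ∈ T, i ≠ j → k ≤ P i + P j) :
    (T.card : ℝ) * (k / 2) ≤ ∑ i ∈ T, P i := by
  set c : ℝ := (T.card : ℝ) with hc
  have hc2 : (2 : ℝ) ≤ c := by rw [hc]; exact_mod_cast hT
  set S : ℝ := ∑ i ∈ T, P i with hS
  have step : ∀ i ∈ T, (c - 1) * k ≤ (c - 2) * P i + S := by
    intro i hi
    have h1 : ∑ j ∈ T.erase i, (P i + P j) = (c - 2) * P i + S := by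
      rw [Finset.sum_add_distrib, Finset.sum_const, Finset.card_erase_of_mem hi,
        Finset.sum_erase_eq_sub hi, nsmul_eq_mul, Nat.cast_sub (by omega)]
      push_cast
      ring
    have h2 : (c - 1) * k ≤ ∑ j ∈ T.erase i, (P i + P j) := by
      calc (c - 1) * k = ∑ _j ∈ T.erase i, k := by
            rw [Finset.sum_const, Finset.card_erase_of_mem hi, nsmul_eq_mul,
              Nat.cast_sub (by omega)]
            push_cast; ring
        _ ≤ _ := Finset.sum_le_sum (fun j hj =>
            h i hi j (Finset.mem_of_mem_erase hj) (Ne.symm (Finset.ne_of_mem_erase hj)))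
    linarith
  have key : c * ((c - 1) * k) ≤ (c - 2) * S + c * S := by
    calc c * ((c - 1) * k) = ∑ _i ∈ T, (c - 1) * k := by rw [Finset.sum_const, nsmul_eq_mul]
      _ ≤ ∑ i ∈ T, ((c - 2) * P i + S) := Finset.sum_le_sum step
      _ = (c - 2) * S + c * S := by
          rw [Finset.sum_add_distrib, ← Finset.mul_sum, Finset.sum_const, nsmul_eq_mul]
  have hpos : (0 : ℝ) < c - 1 := by linarith
  have h3 : (c - 1) * (c * k) ≤ (c - 1) * (2 * S) := by nlinarith [key]
  have h4 := (mul_le_mul_iff_right₀ hpos).mp h3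
  linarith

variable {m : ℕ} {a : Fin m → ℕ}

lemma gadj {x y : Σ i : Fin m, Fin (a i)} :
    (completeMultipartiteGraph (fun i : Fin m => Fin (a i))).Adj x y ↔ x.1 ≠ y.1 := Iff.rfl

lemma dist_cross {x y : Σ i : Fin m, Fin (a i)} (h : x.1 ≠ y.1) :
    (completeMultipartiteGraph (fun i : Fin m => Fin (a i))).dist x y = 1 :=
  dist_eq_one_iff_adj.mpr (gadj.mpr h)

lemma dist_same (hm : 2 ≤ m) (ha : ∀ i, 1 ≤ a i) {x y : Σ i : Fin m, Fin (a i)}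
    (hxy : x ≠ y) (h : x.1 = y.1) :
    (completeMultipartiteGraph (fun i : Fin m => Fin (a i))).dist x y = 2 := by
  obtain ⟨j, hj⟩ := Fintype.exists_ne_of_one_lt_card (α := Fin m) (by simp; omega) x.1
  have h1 : (completeMultipartiteGraph (fun i : Fin m => Fin (a i))).Adj x ⟨j, ⟨0, ha j⟩⟩ :=
    gadj.mpr (Ne.symm hj)
  have h2 : (completeMultipartiteGraph (fun i : Fin m => Fin (a i))).Adj ⟨j, ⟨0, ha j⟩⟩ y :=
    gadj.mpr (h ▸ hj)
  have hle := SimpleGraph.dist_le (h1.toWalk.append h2.toWalk)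
  simp [SimpleGraph.Walk.length_append] at hle
  have hne0 : (completeMultipartiteGraph (fun i : Fin m => Fin (a i))).dist x y ≠ 0 := by
    rw [Ne, SimpleGraph.Reachable.dist_eq_zero_iff ⟨h1.toWalk.append h2.toWalk⟩]
    exact hxy
  have hne1 : (completeMultipartiteGraph (fun i : Fin m => Fin (a i))).dist x y ≠ 1 := by
    intro hc
    exact (gadj.mp (dist_eq_one_iff_adj.mp hc)) h
  omega

lemma resSet_same (hm : 2 ≤ m) (ha : ∀ i, 1 ≤ a i) {x y : Σ i : Fin m, Fin (a i)}
    (hxy : x ≠ y) (h : x.1 = y.1) :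
    resSet (completeMultipartiteGraph (fun i : Fin m => Fin (a i))) x y = {x, y} := by
  ext z
  simp only [resSet, Finset.mem_filter, Finset.mem_univ, true_and, Finset.mem_insert,
    Finset.mem_singleton]
  constructor
  · intro hz
    by_contra hc
    push_neg at hc
    obtain ⟨hzx, hzy⟩ := hc
    apply hz
    by_cases hz1 : z.1 = x.1
    · rw [dist_same hm ha (Ne.symm hzx) hz1.symm, dist_same hm ha (Ne.symm hzy) (hz1.trans h).symm]
    · rw [dist_cross (fun hc' => hz1 hc'.symm), dist_cross (fun hc' => hz1 (h.trans hc').symm)]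
  · rintro (rfl | rfl)
    · rw [SimpleGraph.dist_self, dist_same hm ha (Ne.symm hxy) h.symm]
      omega
    · rw [SimpleGraph.dist_self, dist_same hm ha hxy h]
      omega

lemma resSet_cross (hm : 2 ≤ m) (ha : ∀ i, 1 ≤ a i) {x y : Σ i : Fin m, Fin (a i)}
    (h : x.1 ≠ y.1) :
    resSet (completeMultipartiteGraph (fun i : Fin m => Fin (a i))) x y
      = Finset.univ.filter (fun z => z.1 = x.1 ∨ z.1 = y.1) := by
  ext z
  simp only [resSet, Finset.mem_filter, Finset.mem_univ, true_and]
  constructor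
  · intro hz
    by_contra hc
    push_neg at hc
    obtain ⟨h1, h2⟩ := hc
    exact hz (by rw [dist_cross (fun hc' => h1 hc'.symm), dist_cross (fun hc' => h2 hc'.symm)])
  · rintro (hz | hz)
    · have hzy : z.1 ≠ y.1 := fun hc => h (hz ▸ hc)
      rw [dist_cross (fun hc' => hzy hc'.symm)]
      by_cases hzx : z = x
      · subst hzx; rw [SimpleGraph.dist_self]; omega
      · rw [dist_same hm ha (Ne.symm hzx) hz.symm]; omega
    · have hzx : z.1 ≠ x.1 := fun hc => h (hc.symm.trans hz)
      rw [dist_cross (fun hc' => hzx hc'.symm)]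
      by_cases hzy : z = y
      · subst hzy; rw [SimpleGraph.dist_self]; omega
      · rw [dist_same hm ha (Ne.symm hzy) hz.symm]; omega

lemma sum_part {M : Type*} [AddCommMonoid M] (g : (Σ i : Fin m, Fin (a i)) → M) (i : Fin m) :
    ∑ z ∈ Finset.univ.filter (fun z : Σ i : Fin m, Fin (a i) => z.1 = i), g z
      = ∑ b : Fin (a i), g ⟨i, b⟩ := by
  rw [Finset.sum_filter, ← Finset.univ_sigma_univ, Finset.sum_sigma]
  rw [Finset.sum_eq_single_of_mem i (Finset.mem_univ i)]
  · simp
  · intro j _ hj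
    simp [hj]

lemma sum_resSet_cross {M : Type*} [AddCommMonoid M] (hm : 2 ≤ m) (ha : ∀ i, 1 ≤ a i)
    {x y : Σ i : Fin m, Fin (a i)} (h : x.1 ≠ y.1) (g : (Σ i : Fin m, Fin (a i)) → M) :
    ∑ z ∈ resSet (completeMultipartiteGraph (fun i : Fin m => Fin (a i))) x y, g z
      = (∑ b : Fin (a x.1), g ⟨x.1, b⟩) + ∑ b : Fin (a y.1), g ⟨y.1, b⟩ := by
  rw [resSet_cross hm ha h, Finset.filter_or, Finset.sum_union, sum_part, sum_part]
  rw [Finset.disjoint_left]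
  intro z hz1 hz2
  simp only [Finset.mem_filter] at hz1 hz2
  exact h (hz1.2 ▸ hz2.2)

lemma two_le_card_resSet (hm : 2 ≤ m) (ha : ∀ i, 1 ≤ a i)
    {x y : Σ i : Fin m, Fin (a i)} (hxy : x ≠ y) :
    2 ≤ (resSet (completeMultipartiteGraph (fun i : Fin m => Fin (a i))) x y).card := by
  have hx : x ∈ resSet (completeMultipartiteGraph (fun i : Fin m => Fin (a i))) x y := by
    simp only [resSet, Finset.mem_filter, Finset.mem_univ, true_and]
    rw [SimpleGraph.dist_self]
    by_cases h : y.1 = x.1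
    · rw [dist_same hm ha (Ne.symm hxy) h]; omega
    · rw [dist_cross h]; omega
  have hy : y ∈ resSet (completeMultipartiteGraph (fun i : Fin m => Fin (a i))) x y := by
    simp only [resSet, Finset.mem_filter, Finset.mem_univ, true_and]
    rw [SimpleGraph.dist_self]
    by_cases h : x.1 = y.1
    · rw [dist_same hm ha hxy h]; omega
    · rw [dist_cross h]; omega
  calc 2 = ({x, y} : Finset _).card := (Finset.card_pair hxy).symm
    _ ≤ _ := Finset.card_le_card (by
        intro z hz
        simp only [Finset.mem_insert, Finset.mem_singleton] at hz
        rcases hz with rfl | rfl <;> assumption)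

end FracDimAux

open FracDim FracDimAux in
/-- For the complete `m`-partite graph `K_{a₁,…,a_m}` (`m ≥ 2`, each `aᵢ ≥ 1`) of order
`n = Σ aᵢ ≥ 2`: `κ = 2`, and for every real `k` with `1 ≤ k ≤ 2`,
`dim_f^k = k(n−1)/2` if `aᵢ = 1` for exactly one index `i`, and `dim_f^k = kn/2`
otherwise. -/
theorem fracKDim_completeMultipartite (m : ℕ) (hm : 2 ≤ m) (a : Fin m → ℕ)
    (ha : ∀ i, 1 ≤ a i) (hn : 2 ≤ ∑ i, a i) :
    kappa (SimpleGraph.completeMultipartiteGraph (fun i : Fin m => Fin (a i))) = 2 ∧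
      ∀ k : ℝ, 1 ≤ k → k ≤ 2 →
        ((∃! i, a i = 1) →
          fracKDim (SimpleGraph.completeMultipartiteGraph (fun i : Fin m => Fin (a i))) k
            = k * ((∑ i, a i : ℕ) - 1 : ℝ) / 2) ∧
        (¬ (∃! i, a i = 1) →
          fracKDim (SimpleGraph.completeMultipartiteGraph (fun i : Fin m => Fin (a i))) k
            = k * ((∑ i, a i : ℕ) : ℝ) / 2) := by
  classical
  constructor
  · -- κ = 2
    have hmem : 2 ∈ {n : ℕ | ∃ x y : Σ i : Fin m, Fin (a i), x ≠ y ∧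
        (resSet (SimpleGraph.completeMultipartiteGraph (fun i : Fin m => Fin (a i))) x y).card = n} := by
      by_cases hex : ∃ i, 2 ≤ a i
      · obtain ⟨i, hi⟩ := hex
        have hne : (⟨i, ⟨0, by omega⟩⟩ : Σ i : Fin m, Fin (a i)) ≠ ⟨i, ⟨1, by omega⟩⟩ := by
          intro hc
          simp [Fin.ext_iff] at hc
        exact ⟨_, _, hne, by rw [resSet_same hm ha hne rfl, Finset.card_pair hne]⟩
      · push_neg at hex
        have h0 : (0 : ℕ) < m := by omega
        have h1 : (1 : ℕ) < m := by omega
        have hij : (⟨0, h0⟩ : Fin m) ≠ ⟨1, h1⟩ := by simp [Fin.ext_iff]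
        have hxy : (⟨⟨0, h0⟩, ⟨0, ha _⟩⟩ : Σ i : Fin m, Fin (a i)) ≠ ⟨⟨1, h1⟩, ⟨0, ha _⟩⟩ :=
          fun hc => hij (congrArg Sigma.fst hc)
        refine ⟨⟨⟨0, h0⟩, ⟨0, ha _⟩⟩, ⟨⟨1, h1⟩, ⟨0, ha _⟩⟩, hxy, ?_⟩
        rw [Finset.card_eq_sum_ones, sum_resSet_cross hm ha hij (fun _ => 1)]
        have e0 : a ⟨0, h0⟩ = 1 := by have := ha ⟨0, h0⟩; have := hex ⟨0, h0⟩; omega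
        have e1 : a ⟨1, h1⟩ = 1 := by have := ha ⟨1, h1⟩; have := hex ⟨1, h1⟩; omega
        simp [e0, e1]
    refine le_antisymm (Nat.sInf_le hmem) (le_csInf ⟨2, hmem⟩ ?_)
    rintro c ⟨x, y, hxy, rfl⟩
    exact two_le_card_resSet hm ha hxy
  · intro k hk1 hk2
    have hk0 : (0 : ℝ) ≤ k := by linarith
    -- general facts for resolving functions
    have htotal : ∀ g : (Σ i : Fin m, Fin (a i)) → ℝ,
        ∑ v, g v = ∑ i, ∑ b : Fin (a i), g ⟨i, b⟩ := by
      intro g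
      rw [← Finset.univ_sigma_univ, Finset.sum_sigma]
    have hcrossb : ∀ g : (Σ i : Fin m, Fin (a i)) → ℝ,
        IsKResolving (SimpleGraph.completeMultipartiteGraph (fun i : Fin m => Fin (a i))) k g →
        ∀ i j : Fin m, i ≠ j → k ≤ (∑ b : Fin (a i), g ⟨i, b⟩) + ∑ b : Fin (a j), g ⟨j, b⟩ := by
      intro g hg i j hij
      have hxy : (⟨i, ⟨0, ha i⟩⟩ : Σ i : Fin m, Fin (a i)) ≠ ⟨j, ⟨0, ha j⟩⟩ :=
        fun hc => hij (congrArg Sigma.fst hc)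
      have h1 := hg.2 _ _ hxy
      rwa [sum_resSet_cross hm ha (show (⟨i, ⟨0, ha i⟩⟩ : Σ i : Fin m, Fin (a i)).1 ≠
        (⟨j, ⟨0, ha j⟩⟩ : Σ i : Fin m, Fin (a i)).1 from hij) g] at h1
    have hpartb : ∀ g : (Σ i : Fin m, Fin (a i)) → ℝ,
        IsKResolving (SimpleGraph.completeMultipartiteGraph (fun i : Fin m => Fin (a i))) k g →
        ∀ i : Fin m, 2 ≤ a i → (a i : ℝ) * (k / 2) ≤ ∑ b : Fin (a i), g ⟨i, b⟩ := by
      intro g hg i hi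
      have hcard : 2 ≤ (Finset.univ : Finset (Fin (a i))).card := by simpa using hi
      have hpair : ∀ b ∈ (Finset.univ : Finset (Fin (a i))), ∀ c ∈ (Finset.univ : Finset (Fin (a i))),
          b ≠ c → k ≤ g ⟨i, b⟩ + g ⟨i, c⟩ := by
        intro b _ c _ hbc
        have hxy : (⟨i, b⟩ : Σ i : Fin m, Fin (a i)) ≠ ⟨i, c⟩ := by
          intro hc; apply hbc; simpa using hc
        have h1 := hg.2 _ _ hxy
        rwa [resSet_same hm ha hxy rfl, Finset.sum_pair hxy] at h1
      have := pair_sum_bound hcard hpair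
      simpa using this
    constructor
    · -- exactly one part of size 1
      rintro ⟨i0, hi0, huniq⟩
      have hbig : ∀ j, j ≠ i0 → 2 ≤ a j := by
        intro j hj
        have h1 := ha j
        by_contra hc
        exact hj (huniq j (by omega))
      have hcast : ∑ j ∈ Finset.univ.erase i0, (a j : ℝ) = ((∑ i, a i : ℕ) : ℝ) - 1 := by
        have h1 : a i0 + ∑ j ∈ Finset.univ.erase i0, a j = ∑ i, a i :=
          Finset.add_sum_erase _ a (Finset.mem_univ i0)
        have h2 : ∑ j ∈ Finset.univ.erase i0, a j = (∑ i, a i) - 1 := by omega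
        rw [← Nat.cast_sum, h2, Nat.cast_sub (by omega)]
        simp
      set g : (Σ i : Fin m, Fin (a i)) → ℝ := fun v => if v.1 = i0 then 0 else k / 2 with hgdef
      have hQ : ∀ j : Fin m, ∑ b : Fin (a j), g ⟨j, b⟩
          = if j = i0 then 0 else (a j : ℝ) * (k / 2) := by
        intro j
        by_cases hj : j = i0
        · simp [hgdef, hj]
        · rw [if_neg hj]
          have hterm : ∀ b : Fin (a j), g ⟨j, b⟩ = k / 2 := fun b => if_neg hj
          rw [Finset.sum_congr rfl (fun b _ => hterm b), Finset.sum_const, Finset.card_univ,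
            Fintype.card_fin, nsmul_eq_mul]
      have hb : ∀ v, 0 ≤ g v ∧ g v ≤ 1 := by
        intro v
        by_cases hv : v.1 = i0
        · rw [hgdef]; simp only [hv, if_pos rfl]; norm_num
        · rw [hgdef]; simp only [if_neg hv]; constructor <;> linarith
      have hres : ∀ x y : Σ i : Fin m, Fin (a i), x ≠ y →
          k ≤ ∑ z ∈ resSet (SimpleGraph.completeMultipartiteGraph
            (fun i : Fin m => Fin (a i))) x y, g z := by
        intro x y hxy
        by_cases hsame : x.1 = y.1
        · have hx0 : x.1 ≠ i0 := by
            intro hc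
            apply hxy
            obtain ⟨xi, xb⟩ := x
            obtain ⟨yi, yb⟩ := y
            simp only at hsame hc
            subst hsame
            have h1 : a xi = 1 := by rw [hc]; exact hi0
            have h2 := xb.isLt
            have h3 := yb.isLt
            exact congrArg (Sigma.mk xi) (Fin.ext (by omega))
          have hy0 : y.1 ≠ i0 := hsame ▸ hx0
          rw [resSet_same hm ha hxy hsame, Finset.sum_pair hxy]
          have e1 : g x = k / 2 := if_neg hx0
          have e2 : g y = k / 2 := if_neg hy0
          rw [e1, e2]; linarith
        · rw [sum_resSet_cross hm ha hsame g, hQ, hQ]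
          by_cases hx0 : x.1 = i0
          · have hy0 : y.1 ≠ i0 := fun hc => hsame (hx0.trans hc.symm)
            rw [if_pos hx0, if_neg hy0]
            have h2 : (2 : ℝ) ≤ (a y.1 : ℝ) := by exact_mod_cast hbig y.1 hy0
            nlinarith
          · by_cases hy0 : y.1 = i0
            · rw [if_neg hx0, if_pos hy0]
              have h2 : (2 : ℝ) ≤ (a x.1 : ℝ) := by exact_mod_cast hbig x.1 hx0
              nlinarith
            · rw [if_neg hx0, if_neg hy0]
              have h2 : (1 : ℝ) ≤ (a x.1 : ℝ) := by exact_mod_cast ha x.1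
              have h3 : (1 : ℝ) ≤ (a y.1 : ℝ) := by exact_mod_cast ha y.1
              nlinarith
      have hval : ∑ v, g v = k * ((∑ i, a i : ℕ) - 1 : ℝ) / 2 := by
        rw [htotal g, Finset.sum_congr rfl (fun j _ => hQ j)]
        have hzero : (fun j : Fin m => if j = i0 then (0 : ℝ) else (a j : ℝ) * (k / 2)) i0 = 0 := by
          simp
        rw [← Finset.sum_erase (f := fun j : Fin m => if j = i0 then (0 : ℝ) else (a j : ℝ) * (k / 2))
          (a := i0) Finset.univ hzero]
        rw [Finset.sum_congr rfl
          (fun j hj => if_neg (Finset.ne_of_mem_erase hj))]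
        rw [← Finset.sum_mul, hcast]
        ring
      apply fracKDim_eq ⟨g, ⟨hb, hres⟩, hval.symm⟩
      intro g' hg'
      rw [htotal g']
      have h1 : ∀ j ∈ Finset.univ.erase i0, (a j : ℝ) * (k / 2) ≤ ∑ b : Fin (a j), g' ⟨j, b⟩ :=
        fun j hj => hpartb g' hg' j (hbig j (Finset.ne_of_mem_erase hj))
      have h2 : 0 ≤ ∑ b : Fin (a i0), g' ⟨i0, b⟩ :=
        Finset.sum_nonneg (fun b _ => (hg'.1 _).1)
      have h3 : ∑ j ∈ Finset.univ.erase i0, (a j : ℝ) * (k / 2)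
          ≤ ∑ j ∈ Finset.univ.erase i0, ∑ b : Fin (a j), g' ⟨j, b⟩ := Finset.sum_le_sum h1
      have h4 : (∑ b : Fin (a i0), g' ⟨i0, b⟩) + ∑ j ∈ Finset.univ.erase i0,
          ∑ b : Fin (a j), g' ⟨j, b⟩ = ∑ j, ∑ b : Fin (a j), g' ⟨j, b⟩ :=
        Finset.add_sum_erase Finset.univ (fun j => ∑ b : Fin (a j), g' ⟨j, b⟩)
          (Finset.mem_univ i0)
      have h5 : ∑ j ∈ Finset.univ.erase i0, (a j : ℝ) * (k / 2)
          = k * ((∑ i, a i : ℕ) - 1 : ℝ) / 2 := by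
        rw [← Finset.sum_mul, hcast]; ring
      linarith
    · -- not exactly one part of size 1
      intro hnot
      set g : (Σ i : Fin m, Fin (a i)) → ℝ := fun _ => k / 2 with hgdef
      have hb : ∀ v, 0 ≤ g v ∧ g v ≤ 1 := fun v => ⟨by rw [hgdef]; dsimp; linarith,
        by rw [hgdef]; dsimp; linarith⟩
      have hres : ∀ x y : Σ i : Fin m, Fin (a i), x ≠ y →
          k ≤ ∑ z ∈ resSet (SimpleGraph.completeMultipartiteGraph
            (fun i : Fin m => Fin (a i))) x y, g z := by
        intro x y hxy
        have hcard := two_le_card_resSet hm ha hxy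
        have hc : (2 : ℝ) ≤ ((resSet (SimpleGraph.completeMultipartiteGraph
            (fun i : Fin m => Fin (a i))) x y).card : ℝ) := by exact_mod_cast hcard
        rw [hgdef]
        rw [Finset.sum_const, nsmul_eq_mul]
        nlinarith
      have hval : ∑ v, g v = k * ((∑ i, a i : ℕ) : ℝ) / 2 := by
        rw [hgdef]
        rw [Finset.sum_const, Finset.card_univ, nsmul_eq_mul]
        have hcardeq : (Fintype.card (Σ i : Fin m, Fin (a i)) : ℝ) = ((∑ i, a i : ℕ) : ℝ) := by
          rw [Fintype.card_sigma]
          simp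
        rw [hcardeq]
        ring
      apply fracKDim_eq ⟨g, ⟨hb, hres⟩, hval.symm⟩
      intro g' hg'
      rw [htotal g']
      set T := Finset.univ.filter (fun i : Fin m => a i = 1) with hT
      have hTcard : T.card ≠ 1 := by
        intro hc
        obtain ⟨i0, hTi0⟩ := Finset.card_eq_one.mp hc
        apply hnot
        refine ⟨i0, ?_, ?_⟩
        · have hmem : i0 ∈ T := hTi0 ▸ Finset.mem_singleton_self i0
          exact (Finset.mem_filter.mp hmem).2
        · intro j hj
          have hmem : j ∈ T := Finset.mem_filter.mpr ⟨Finset.mem_univ j, hj⟩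
          rw [hTi0] at hmem
          exact Finset.mem_singleton.mp hmem
      have hB : ∑ i ∈ T, (a i : ℝ) * (k / 2) ≤ ∑ i ∈ T, ∑ b : Fin (a i), g' ⟨i, b⟩ := by
        rcases Nat.eq_zero_or_pos T.card with h0 | hpos
        · rw [Finset.card_eq_zero.mp h0]
          simp
        · have h2 : 2 ≤ T.card := by omega
          have hpair : ∀ i ∈ T, ∀ j ∈ T, i ≠ j →
              k ≤ (∑ b : Fin (a i), g' ⟨i, b⟩) + ∑ b : Fin (a j), g' ⟨j, b⟩ :=
            fun i _ j _ hij => hcrossb g' hg' i j hij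
          have hps := pair_sum_bound h2 hpair
          have heq : ∑ i ∈ T, (a i : ℝ) * (k / 2) = (T.card : ℝ) * (k / 2) := by
            rw [Finset.sum_congr rfl (fun i hi => by
              rw [(Finset.mem_filter.mp hi).2, Nat.cast_one, one_mul])]
            rw [Finset.sum_const, nsmul_eq_mul]
          rw [heq]
          exact hps
      have hA : ∀ i ∈ Finset.univ.filter (fun i : Fin m => ¬ a i = 1),
          (a i : ℝ) * (k / 2) ≤ ∑ b : Fin (a i), g' ⟨i, b⟩ := by
        intro i hi
        have h2 : 2 ≤ a i := by
          have := ha i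
          have := (Finset.mem_filter.mp hi).2
          omega
        exact hpartb g' hg' i h2
      calc k * ((∑ i, a i : ℕ) : ℝ) / 2 = ∑ i, (a i : ℝ) * (k / 2) := by
            rw [← Finset.sum_mul, ← Nat.cast_sum]
            ring
        _ = (∑ i ∈ T, (a i : ℝ) * (k / 2))
            + ∑ i ∈ Finset.univ.filter (fun i : Fin m => ¬ a i = 1), (a i : ℝ) * (k / 2) :=
            (Finset.sum_filter_add_sum_filter_not _ _ _).symm
        _ ≤ (∑ i ∈ T, ∑ b : Fin (a i), g' ⟨i, b⟩)
            + ∑ i ∈ Finset.univ.filter (fun i : Fin m => ¬ a i = 1),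
              ∑ b : Fin (a i), g' ⟨i, b⟩ := add_le_add hB (Finset.sum_le_sum hA)
        _ = ∑ i, ∑ b : Fin (a i), g' ⟨i, b⟩ :=
            Finset.sum_filter_add_sum_filter_not _ _ _
end

section
/- Let P_s □ P_t (s, t ≥ 2) be the grid graph, i.e., the Cartesian product of paths on s and t vertices, for which κ(P_s □ P_t) = s + t − 2. For every real number k with 1 ≤ k ≤ s + t − 2, dim_f^k(P_s □ P_t) = 2k. -/
open Finset

section GridAuxSection
open SimpleGraph Finset
open SimpleGraph

lemma pathGraph_adj_nat_dist {n : ℕ} {u v : Fin n} (h : (pathGraph n).Adj u v) :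
    Nat.dist u.val v.val = 1 := by
  rw [pathGraph_adj] at h
  unfold Nat.dist
  omega

lemma nat_dist_le_walk_length {n : ℕ} {i j : Fin n} (w : (pathGraph n).Walk i j) :
    Nat.dist i.val j.val ≤ w.length := by
  induction w with
  | nil => simp [Nat.dist]
  | @cons u v j h p ih =>
    have h1 := pathGraph_adj_nat_dist h
    have := Nat.dist.triangle_inequality u.val v.val j.val
    simp only [SimpleGraph.Walk.length_cons]
    omega

lemma pathGraph_dist {n : ℕ} (i j : Fin n) :
    (pathGraph n).dist i j = Nat.dist i.val j.val := by
  have : Nonempty (Fin n) := ⟨i⟩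
  have hconn : (pathGraph n).Connected := ⟨pathGraph_preconnected n⟩
  apply le_antisymm
  · -- upper bound by induction on Nat.dist
    have key : ∀ k (i j : Fin n), Nat.dist i.val j.val = k → (pathGraph n).dist i j ≤ k := by
      intro k
      induction k with
      | zero =>
        intro i j h
        have : i = j := by
          apply Fin.ext
          unfold Nat.dist at h; omega
        simp [this]
      | succ m ih =>
        intro i j h
        rcases lt_trichotomy i.val j.val with hlt | heq | hgt
        · have hi' : i.val + 1 < n := lt_of_le_of_lt hlt j.isLt
          set i' : Fin n := ⟨i.val + 1, hi'⟩ with hi'def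
          have hadj : (pathGraph n).Adj i i' := by
            rw [pathGraph_adj]; left; rfl
          have h1 : (pathGraph n).dist i i' = 1 := by
            rw [SimpleGraph.dist_eq_one_iff_adj]; exact hadj
          have h2 : Nat.dist i'.val j.val = m := by
            unfold Nat.dist at h ⊢; simp only [hi'def]; omega
          have := hconn.dist_triangle (u := i) (v := i') (w := j)
          have := ih i' j h2
          omega
        · exfalso; unfold Nat.dist at h; omega
        · have hj' : j.val + 1 < n := lt_of_le_of_lt hgt i.isLt
          set j' : Fin n := ⟨j.val + 1, hj'⟩ with hj'def
          have hadj : (pathGraph n).Adj j' j := by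
            rw [pathGraph_adj]; right; rfl
          have h1 : (pathGraph n).dist j' j = 1 := by
            rw [SimpleGraph.dist_eq_one_iff_adj]; exact hadj
          have h2 : Nat.dist i.val j'.val = m := by
            unfold Nat.dist at h ⊢; simp only [hj'def]; omega
          have := hconn.dist_triangle (u := i) (v := j') (w := j)
          have := ih i j' h2
          omega
    exact key _ i j rfl
  · obtain ⟨w, hw⟩ := (hconn.preconnected i j).exists_walk_length_eq_dist
    rw [← hw]
    exact nat_dist_le_walk_length w

lemma boxProd_dist {α β : Type*} {G : SimpleGraph α} {H : SimpleGraph β}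
    (hG : G.Connected) (hH : H.Connected) (x y : α × β) :
    (G □ H).dist x y = G.dist x.1 y.1 + H.dist x.2 y.2 := by
  apply le_antisymm
  · obtain ⟨x1, x2⟩ := x
    obtain ⟨y1, y2⟩ := y
    obtain ⟨p, hp⟩ := hG.exists_walk_length_eq_dist x1 y1
    obtain ⟨q, hq⟩ := hH.exists_walk_length_eq_dist x2 y2
    have hle := SimpleGraph.dist_le ((p.boxProdLeft H x2).append (q.boxProdRight G y1))
    rw [SimpleGraph.Walk.length_append] at hle
    simp only [SimpleGraph.Walk.boxProdLeft, SimpleGraph.Walk.boxProdRight,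
      SimpleGraph.Walk.length_map] at hle
    have e1 := SimpleGraph.Walk.length_map (G.boxProdLeft H x2).toHom p
    have e2 := SimpleGraph.Walk.length_map (G.boxProdRight H y1).toHom q
    exact hle.trans_eq (congrArg₂ (· + ·) (e1.trans hp) (e2.trans hq))
  · have key : ∀ (u v : α × β) (w : (G □ H).Walk u v),
        G.dist u.1 v.1 + H.dist u.2 v.2 ≤ w.length := by
      intro u v w
      induction w with
      | nil => simp
      | @cons u v z h p ih =>
        simp only [SimpleGraph.Walk.length_cons]
        rcases (SimpleGraph.boxProd_adj.mp h) with ⟨h1, h2⟩ | ⟨h1, h2⟩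
        · have hd : G.dist u.1 v.1 = 1 := SimpleGraph.dist_eq_one_iff_adj.mpr h1
          have htr := hG.dist_triangle (u := u.1) (v := v.1) (w := z.1)
          have h2' : H.dist u.2 z.2 = H.dist v.2 z.2 := by rw [h2]
          omega
        · have hd : H.dist u.2 v.2 = 1 := SimpleGraph.dist_eq_one_iff_adj.mpr h1
          have htr := hH.dist_triangle (u := u.2) (v := v.2) (w := z.2)
          have h2' : G.dist u.1 z.1 = G.dist v.1 z.1 := by rw [h2]
          omega
    obtain ⟨w, hw⟩ := ((hG.boxProd hH).preconnected x y).exists_walk_length_eq_dist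
    rw [← hw]
    exact key x y w


namespace GridAux

lemma nd (a b : ℕ) : Nat.dist a b = (a - b) + (b - a) := rfl

/-- boundary predicate -/
def Bp (s t : ℕ) (z : Fin s × Fin t) : Prop :=
  z.1.val = 0 ∨ z.1.val = s - 1 ∨ z.2.val = 0 ∨ z.2.val = t - 1

instance {s t : ℕ} : DecidablePred (Bp s t) := fun _ => by unfold Bp; infer_instance

variable {s t : ℕ}

lemma mem_resSet (hs : 1 ≤ s) (ht : 1 ≤ t) (x y z : Fin s × Fin t) :
    z ∈ FracDim.resSet ((pathGraph s) □ (pathGraph t)) x y ↔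
      Nat.dist x.1.val z.1.val + Nat.dist x.2.val z.2.val ≠
        Nat.dist y.1.val z.1.val + Nat.dist y.2.val z.2.val := by
  have : Nonempty (Fin s) := ⟨⟨0, hs⟩⟩
  have : Nonempty (Fin t) := ⟨⟨0, ht⟩⟩
  have cs : (pathGraph s).Connected := ⟨pathGraph_preconnected s⟩
  have ct : (pathGraph t).Connected := ⟨pathGraph_preconnected t⟩
  simp [FracDim.resSet, boxProd_dist cs ct, pathGraph_dist]


set_option maxHeartbeats 2000000 in
lemma count_main (hs : 2 ≤ s) (ht : 2 ≤ t) (x y : Fin s × Fin t) (hxy : x ≠ y) :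
    s + t - 2 ≤ ((FracDim.resSet ((pathGraph s) □ (pathGraph t)) x y).filter (Bp s t)).card := by
  obtain ⟨R, hR⟩ : ∃ R : Finset (Fin s × Fin t),
      FracDim.resSet ((pathGraph s) □ (pathGraph t)) x y = R := ⟨_, rfl⟩
  rw [hR]
  set S := R.filter (Bp s t) with hS
  have hmem : ∀ z : Fin s × Fin t, z ∈ R ↔
      Nat.dist x.1.val z.1.val + Nat.dist x.2.val z.2.val ≠
        Nat.dist y.1.val z.1.val + Nat.dist y.2.val z.2.val := by
    rw [← hR]; exact mem_resSet (by omega) (by omega) x y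
  clear hR
  -- nat-indexed membership (definitional consequences of `hmem`)
  have hm3 : ∀ (i : ℕ) (hi : i < s) (j : ℕ) (hj : j < t),
      ((⟨i, hi⟩, ⟨j, hj⟩) : Fin s × Fin t) ∈ R ↔
        (x.1.val - i) + (i - x.1.val) + ((x.2.val - j) + (j - x.2.val)) ≠
          (y.1.val - i) + (i - y.1.val) + ((y.2.val - j) + (j - y.2.val)) :=
    fun i hi j hj => hmem (⟨i, hi⟩, ⟨j, hj⟩)
  have hx1 := x.1.isLt; have hx2 := x.2.isLt
  have hy1 := y.1.isLt; have hy2 := y.2.isLt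
  by_cases hA : x.1.val ≠ y.1.val
  · -- case a ≠ c
    set p₁ : (Fin s × Fin t) → Prop := fun z => z.1.val = 0 ∨ z.1.val = s - 1 with hp₁
    have hsplit := Finset.card_filter_add_card_filter_not (s := S) (p := p₁)
    -- vertical claim: in every column, one of the two extreme-row points resolves
    have claim1 : ∀ (j : ℕ) (hj : j < t),
        ((⟨0, by omega⟩, ⟨j, hj⟩) : Fin s × Fin t) ∈ R ∨
        ((⟨s-1, by omega⟩, ⟨j, hj⟩) : Fin s × Fin t) ∈ R := by
      intro j hj
      by_contra hc
      push_neg at hc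
      obtain ⟨h1, h2⟩ := hc
      rw [hm3] at h1 h2
      omega
    have h1 : t ≤ (S.filter p₁).card := by
      have hcle := Finset.card_le_card_of_injOn
        (f := fun j : Fin t => if ((⟨0, by omega⟩, ⟨j.val, j.isLt⟩) : Fin s × Fin t) ∈ R
          then ((⟨0, by omega⟩, ⟨j.val, j.isLt⟩) : Fin s × Fin t)
          else ((⟨s-1, by omega⟩, ⟨j.val, j.isLt⟩) : Fin s × Fin t))
        (s := (univ : Finset (Fin t))) (t := S.filter p₁) ?_ ?_
      · simpa using hcle
      · intro j _
        simp only
        split_ifs with h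
        · simp only [hS, Finset.mem_coe, Finset.mem_filter, Finset.mem_univ]
          exact ⟨⟨h, Or.inl rfl⟩, Or.inl rfl⟩
        · rcases claim1 j.val j.isLt with h' | h'
          · exact absurd h' h
          · simp only [hS, Finset.mem_coe, Finset.mem_filter]
            exact ⟨⟨h', Or.inr (Or.inl rfl)⟩, Or.inr rfl⟩
      · intro j _ j' _ heq
        have h2 := congrArg (fun z : Fin s × Fin t => z.2.val) heq
        simp only [apply_ite (fun z : Fin s × Fin t => z.2.val)] at h2
        simp only [ite_self] at h2
        exact Fin.ext h2
    by_cases hB : x.2.val ≠ y.2.val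
    · -- a ≠ c, b ≠ d
      have claim2 : ∀ (i : ℕ) (hi : i < s),
          ((⟨i, hi⟩, ⟨0, by omega⟩) : Fin s × Fin t) ∈ R ∨
          ((⟨i, hi⟩, ⟨t-1, by omega⟩) : Fin s × Fin t) ∈ R := by
        intro i hi
        by_contra hc
        push_neg at hc
        obtain ⟨h1, h2⟩ := hc
        rw [hm3] at h1 h2
        omega
      have h2 : s - 2 ≤ (S.filter (fun z => ¬ p₁ z)).card := by
        have hcle := Finset.card_le_card_of_injOn
          (f := fun k : Fin (s-2) =>
            if ((⟨k.val+1, by omega⟩, ⟨0, by omega⟩) : Fin s × Fin t) ∈ R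
            then ((⟨k.val+1, by omega⟩, ⟨0, by omega⟩) : Fin s × Fin t)
            else ((⟨k.val+1, by omega⟩, ⟨t-1, by omega⟩) : Fin s × Fin t))
          (s := (univ : Finset (Fin (s-2)))) (t := S.filter (fun z => ¬ p₁ z)) ?_ ?_
        · simpa using hcle
        · intro k _
          have hk := k.isLt
          simp only
          split_ifs with h
          · simp only [hS, Finset.mem_coe, Finset.mem_filter]
            refine ⟨⟨h, Or.inr (Or.inr (Or.inl rfl))⟩, ?_⟩
            show ¬ (k.val + 1 = 0 ∨ k.val + 1 = s - 1)
            omega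
          · rcases claim2 (k.val+1) (by omega) with h' | h'
            · exact absurd h' h
            · simp only [hS, Finset.mem_coe, Finset.mem_filter]
              refine ⟨⟨h', Or.inr (Or.inr (Or.inr rfl))⟩, ?_⟩
              show ¬ (k.val + 1 = 0 ∨ k.val + 1 = s - 1)
              omega
        · intro k _ k' _ heq
          have h1 := congrArg (fun z : Fin s × Fin t => z.1.val) heq
          simp only [apply_ite (fun z : Fin s × Fin t => z.1.val)] at h1
          simp only [ite_self] at h1
          exact Fin.ext (by omega)
      omega
    · -- a ≠ c, b = d
      push_neg at hB
      have claimL : ∀ (j : ℕ) (hj : j < t),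
          ((⟨0, by omega⟩, ⟨j, hj⟩) : Fin s × Fin t) ∈ R := by
        intro j hj
        rw [hm3]
        omega
      have claimR : ∀ (j : ℕ) (hj : j < t),
          ((⟨s-1, by omega⟩, ⟨j, hj⟩) : Fin s × Fin t) ∈ R := by
        intro j hj
        rw [hm3]
        omega
      have h1' : 2 * t ≤ (S.filter p₁).card := by
        have hcle := Finset.card_le_card_of_injOn
          (f := fun bj : Bool × Fin t =>
            if bj.1 then ((⟨0, by omega⟩, ⟨bj.2.val, bj.2.isLt⟩) : Fin s × Fin t)
            else ((⟨s-1, by omega⟩, ⟨bj.2.val, bj.2.isLt⟩) : Fin s × Fin t))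
          (s := (univ : Finset (Bool × Fin t))) (t := S.filter p₁) ?_ ?_
        · simpa [Finset.card_univ] using hcle
        · rintro ⟨b, j⟩ _
          simp only [hS, Finset.mem_coe, Finset.mem_filter]
          cases b
          · simp only [if_neg Bool.false_ne_true]
            exact ⟨⟨claimR j.val j.isLt, Or.inr (Or.inl rfl)⟩, Or.inr rfl⟩
          · simp only [if_pos rfl]
            exact ⟨⟨claimL j.val j.isLt, Or.inl rfl⟩, Or.inl rfl⟩
        · rintro ⟨b, j⟩ _ ⟨b', j'⟩ _ heq
          have e2 := congrArg (fun z : Fin s × Fin t => z.2.val) heq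
          have e1 := congrArg (fun z : Fin s × Fin t => z.1.val) heq
          simp only [apply_ite (fun z : Fin s × Fin t => z.2.val),
            apply_ite (fun z : Fin s × Fin t => z.1.val), ite_self] at e1 e2
          have hbj : j = j' := Fin.ext e2
          subst hbj
          cases b <;> cases b' <;> simp_all <;> omega
      have claim2' : ∀ k k' : Fin (s-2),
          ((⟨k.val+1, by omega⟩, ⟨0, by omega⟩) : Fin s × Fin t) ∉ R →
          ((⟨k'.val+1, by omega⟩, ⟨0, by omega⟩) : Fin s × Fin t) ∉ R → k = k' := by
        intro k k' h1 h2
        rw [hm3] at h1 h2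
        simp only [not_not] at h1 h2
        exact Fin.ext (by omega)
      have h2' : s - 2 - 1 ≤ (S.filter (fun z => ¬ p₁ z)).card := by
        set P : Fin (s-2) → Prop :=
          fun k => ((⟨k.val+1, by omega⟩, ⟨0, by omega⟩) : Fin s × Fin t) ∈ R with hP
        have hsplitT := Finset.card_filter_add_card_filter_not
          (s := (univ : Finset (Fin (s-2)))) (p := P)
        have hneg : ((univ : Finset (Fin (s-2))).filter (fun k => ¬ P k)).card ≤ 1 := by
          apply Finset.card_le_one.mpr
          intro k hk k' hk'
          simp only [Finset.mem_filter, hP] at hk hk'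
          exact claim2' k k' hk.2 hk'.2
        have huc : (univ : Finset (Fin (s-2))).card = s - 2 := by simp
        have hcle := Finset.card_le_card_of_injOn
          (f := fun k : Fin (s-2) => ((⟨k.val+1, by omega⟩, ⟨0, by omega⟩) : Fin s × Fin t))
          (s := (univ : Finset (Fin (s-2))).filter P) (t := S.filter (fun z => ¬ p₁ z)) ?_ ?_
        · omega
        · intro k hk
          have hkk := k.isLt
          simp only [Finset.mem_coe, Finset.mem_filter, hP] at hk
          simp only [hS, Finset.mem_coe, Finset.mem_filter]
          refine ⟨⟨hk.2, Or.inr (Or.inr (Or.inl rfl))⟩, ?_⟩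
          show ¬ (k.val + 1 = 0 ∨ k.val + 1 = s - 1)
          omega
        · intro k _ k' _ heq
          have h1 := congrArg (fun z : Fin s × Fin t => z.1.val) heq
          simp only at h1
          exact Fin.ext (by omega)
      omega
  · -- case a = c, so b ≠ d
    push_neg at hA
    have hB : x.2.val ≠ y.2.val := by
      intro h
      exact hxy (Prod.ext (Fin.ext hA) (Fin.ext h))
    set p' : (Fin s × Fin t) → Prop := fun z => z.2.val = 0 ∨ z.2.val = t - 1 with hp'
    have hsplit := Finset.card_filter_add_card_filter_not (s := S) (p := p')
    have claimB : ∀ (i : ℕ) (hi : i < s),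
        ((⟨i, hi⟩, ⟨0, by omega⟩) : Fin s × Fin t) ∈ R ∧
        ((⟨i, hi⟩, ⟨t-1, by omega⟩) : Fin s × Fin t) ∈ R := by
      intro i hi
      constructor <;> (rw [hm3]; omega)
    have h1 : 2 * s ≤ (S.filter p').card := by
      have hcle := Finset.card_le_card_of_injOn
        (f := fun bi : Bool × Fin s =>
          if bi.1 then ((⟨bi.2.val, bi.2.isLt⟩, ⟨0, by omega⟩) : Fin s × Fin t)
          else ((⟨bi.2.val, bi.2.isLt⟩, ⟨t-1, by omega⟩) : Fin s × Fin t))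
        (s := (univ : Finset (Bool × Fin s))) (t := S.filter p') ?_ ?_
      · simpa [Finset.card_univ] using hcle
      · rintro ⟨b, i⟩ _
        simp only [hS, Finset.mem_coe, Finset.mem_filter]
        cases b
        · simp only [if_neg Bool.false_ne_true]
          exact ⟨⟨(claimB i.val i.isLt).2, Or.inr (Or.inr (Or.inr rfl))⟩, Or.inr rfl⟩
        · simp only [if_pos rfl]
          exact ⟨⟨(claimB i.val i.isLt).1, Or.inr (Or.inr (Or.inl rfl))⟩, Or.inl rfl⟩
      · rintro ⟨b, i⟩ _ ⟨b', i'⟩ _ heq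
        have e1 := congrArg (fun z : Fin s × Fin t => z.1.val) heq
        have e2 := congrArg (fun z : Fin s × Fin t => z.2.val) heq
        simp only [apply_ite (fun z : Fin s × Fin t => z.1.val),
          apply_ite (fun z : Fin s × Fin t => z.2.val), ite_self] at e1 e2
        have hbi : i = i' := Fin.ext e1
        subst hbi
        cases b <;> cases b' <;> simp_all <;> omega
    have claimB2 : ∀ k k' : Fin (t-2),
        ((⟨0, by omega⟩, ⟨k.val+1, by omega⟩) : Fin s × Fin t) ∉ R →
        ((⟨0, by omega⟩, ⟨k'.val+1, by omega⟩) : Fin s × Fin t) ∉ R → k = k' := by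
      intro k k' h1 h2
      rw [hm3] at h1 h2
      simp only [not_not] at h1 h2
      exact Fin.ext (by omega)
    have h2 : t - 2 - 1 ≤ (S.filter (fun z => ¬ p' z)).card := by
      set P : Fin (t-2) → Prop :=
        fun k => ((⟨0, by omega⟩, ⟨k.val+1, by omega⟩) : Fin s × Fin t) ∈ R with hP
      have hsplitT := Finset.card_filter_add_card_filter_not
        (s := (univ : Finset (Fin (t-2)))) (p := P)
      have hneg : ((univ : Finset (Fin (t-2))).filter (fun k => ¬ P k)).card ≤ 1 := by
        apply Finset.card_le_one.mpr
        intro k hk k' hk'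
        simp only [Finset.mem_filter, hP] at hk hk'
        exact claimB2 k k' hk.2 hk'.2
      have huc : (univ : Finset (Fin (t-2))).card = t - 2 := by simp
      have hcle := Finset.card_le_card_of_injOn
        (f := fun k : Fin (t-2) => ((⟨0, by omega⟩, ⟨k.val+1, by omega⟩) : Fin s × Fin t))
        (s := (univ : Finset (Fin (t-2))).filter P) (t := S.filter (fun z => ¬ p' z)) ?_ ?_
      · omega
      · intro k hk
        have hkk := k.isLt
        simp only [Finset.mem_coe, Finset.mem_filter, hP] at hk
        simp only [hS, Finset.mem_coe, Finset.mem_filter]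
        refine ⟨⟨hk.2, Or.inl rfl⟩, ?_⟩
        show ¬ (k.val + 1 = 0 ∨ k.val + 1 = t - 1)
        omega
      · intro k _ k' _ heq
        have h1 := congrArg (fun z : Fin s × Fin t => z.2.val) heq
        simp only at h1
        exact Fin.ext (by omega)
    omega



-- exact count for the pair ((s-2,0),(s-1,1))
lemma card_R1_gen (hs : 2 ≤ s) (ht : 2 ≤ t) (R : Finset (Fin s × Fin t))
    (hm3 : ∀ (i : ℕ) (hi : i < s) (j : ℕ) (hj : j < t),
      ((⟨i, hi⟩, ⟨j, hj⟩) : Fin s × Fin t) ∈ R ↔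
        (s-2-i)+(i-(s-2)) + ((0-j)+(j-0)) ≠ (s-1-i)+(i-(s-1)) + ((1-j)+(j-1))) :
    R.card = s + t - 2 := by
  apply Finset.card_eq_of_bijective
    (f := fun m hm => if h : m ≤ s - 2
      then ((⟨m, by omega⟩, ⟨0, by omega⟩) : Fin s × Fin t)
      else ((⟨s-1, by omega⟩, ⟨m - (s-2), by omega⟩) : Fin s × Fin t))
  · -- surjective onto R
    intro z hz
    have hchar := (hm3 z.1.val z.1.isLt z.2.val z.2.isLt).mp hz
    have hz1 := z.1.isLt; have hz2 := z.2.isLt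
    have hcases : (z.2.val = 0 ∧ z.1.val ≤ s - 2) ∨ (1 ≤ z.2.val ∧ z.1.val = s - 1) := by
      omega
    rcases hcases with ⟨h1, h2⟩ | ⟨h1, h2⟩
    · refine ⟨z.1.val, by omega, ?_⟩
      rw [dif_pos h2]
      ext <;> simp <;> omega
    · refine ⟨s - 2 + z.2.val, by omega, ?_⟩
      rw [dif_neg (by omega)]
      ext <;> simp <;> omega
  · -- maps into R
    intro m hmlt
    by_cases h : m ≤ s - 2
    · rw [dif_pos h, hm3]
      omega
    · rw [dif_neg h, hm3]
      omega
  · -- injective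
    intro m m' hm hm' heq
    by_cases h : m ≤ s - 2 <;> by_cases h' : m' ≤ s - 2
    · rw [dif_pos h, dif_pos h'] at heq
      have := congrArg (fun z : Fin s × Fin t => z.1.val) heq
      simpa using this
    · rw [dif_pos h, dif_neg h'] at heq
      have e1 := congrArg (fun z : Fin s × Fin t => z.1.val) heq
      have e2 := congrArg (fun z : Fin s × Fin t => z.2.val) heq
      simp at e1 e2
      omega
    · rw [dif_neg h, dif_pos h'] at heq
      have e1 := congrArg (fun z : Fin s × Fin t => z.1.val) heq
      have e2 := congrArg (fun z : Fin s × Fin t => z.2.val) heq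
      simp at e1 e2
      omega
    · rw [dif_neg h, dif_neg h'] at heq
      have e2 := congrArg (fun z : Fin s × Fin t => z.2.val) heq
      simp at e2
      omega

-- boundary cardinality
lemma card_B_gen (hs : 2 ≤ s) (ht : 2 ≤ t) :
    ((univ : Finset (Fin s × Fin t)).filter
      (fun z => z.1.val = 0 ∨ z.1.val = s - 1 ∨ z.2.val = 0 ∨ z.2.val = t - 1)).card
      = 2*s + 2*t - 4 := by
  have key : ∀ (n : ℕ), 2 ≤ n → ∀ (q : Fin n → Prop) (_ : DecidablePred q),
      (∀ i : Fin n, q i ↔ (i.val = 0 ∨ i.val = n - 1)) →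
      ((univ : Finset (Fin n)).filter q).card = 2 := by
    intro n hn q _ hq
    have : (univ : Finset (Fin n)).filter q = {⟨0, by omega⟩, ⟨n-1, by omega⟩} := by
      ext i
      simp only [Finset.mem_filter, Finset.mem_univ, true_and, Finset.mem_insert,
        Finset.mem_singleton, hq i, Fin.ext_iff]
    rw [this]
    rw [Finset.card_insert_of_notMem (by simp [Fin.ext_iff]; omega), Finset.card_singleton]
  -- split the boundary filter
  set q1 : Fin s → Prop := fun i => i.val = 0 ∨ i.val = s - 1 with hq1
  set r2 : Fin t → Prop := fun j => j.val = 0 ∨ j.val = t - 1 with hr2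
  have hsplit : ((univ : Finset (Fin s × Fin t)).filter
      (fun z => z.1.val = 0 ∨ z.1.val = s - 1 ∨ z.2.val = 0 ∨ z.2.val = t - 1))
      = ((univ.filter q1) ×ˢ (univ : Finset (Fin t))) ∪
        ((univ.filter (fun i => ¬ q1 i)) ×ˢ (univ.filter r2)) := by
    ext ⟨i, j⟩
    simp only [Finset.mem_filter, Finset.mem_univ, true_and, Finset.mem_union,
      Finset.mem_product, hq1, hr2]
    tauto
  rw [hsplit, Finset.card_union_of_disjoint]
  · rw [Finset.card_product, Finset.card_product]
    have c1 : (univ.filter q1).card = 2 := key s hs q1 _ (fun i => Iff.rfl)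
    have c2 : (univ.filter r2).card = 2 := key t ht r2 _ (fun j => Iff.rfl)
    have c3 : (univ.filter (fun i => ¬ q1 i)).card = s - 2 := by
      have := Finset.card_filter_add_card_filter_not
        (s := (univ : Finset (Fin s))) (p := q1)
      have hu : (univ : Finset (Fin s)).card = s := by simp
      omega
    rw [c1, c2, c3]
    have hu : (univ : Finset (Fin t)).card = t := by simp
    rw [hu]
    omega
  · rw [Finset.disjoint_left]
    rintro ⟨i, j⟩ hij hij'
    simp only [Finset.mem_product, Finset.mem_filter, Finset.mem_univ, true_and] at hij hij'
    exact hij'.1 hij.1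

-- the four-pairs bound
set_option maxHeartbeats 1000000 in
lemma four_pairs_gen (hs : 2 ≤ s) (ht : 2 ≤ t) (R1 R2 R3 R4 : Finset (Fin s × Fin t))
    (hm1 : ∀ z : Fin s × Fin t, z ∈ R1 ↔
      (s-2-z.1.val)+(z.1.val-(s-2)) + ((0-z.2.val)+(z.2.val-0)) ≠
        (s-1-z.1.val)+(z.1.val-(s-1)) + ((1-z.2.val)+(z.2.val-1)))
    (hm2 : ∀ z : Fin s × Fin t, z ∈ R2 ↔
      (1-z.1.val)+(z.1.val-1) + ((t-1-z.2.val)+(z.2.val-(t-1))) ≠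
        (0-z.1.val)+(z.1.val-0) + ((t-2-z.2.val)+(z.2.val-(t-2))))
    (hm3 : ∀ z : Fin s × Fin t, z ∈ R3 ↔
      (1-z.1.val)+(z.1.val-1) + ((0-z.2.val)+(z.2.val-0)) ≠
        (0-z.1.val)+(z.1.val-0) + ((1-z.2.val)+(z.2.val-1)))
    (hm4 : ∀ z : Fin s × Fin t, z ∈ R4 ↔
      (s-1-z.1.val)+(z.1.val-(s-1)) + ((t-2-z.2.val)+(z.2.val-(t-2))) ≠
        (s-2-z.1.val)+(z.1.val-(s-2)) + ((t-1-z.2.val)+(z.2.val-(t-1))))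
    (g : Fin s × Fin t → ℝ) (hg : ∀ v, 0 ≤ g v) :
    (∑ z ∈ R1, g z) + (∑ z ∈ R2, g z) + (∑ z ∈ R3, g z) + (∑ z ∈ R4, g z)
      ≤ 2 * ∑ v, g v := by
  have hrw : ∀ (A : Finset (Fin s × Fin t)),
      ∑ z ∈ A, g z = ∑ z ∈ univ, if z ∈ A then g z else 0 := by
    intro A
    rw [← Finset.sum_filter]
    congr 1
    ext z
    simp
  rw [hrw R1, hrw R2, hrw R3, hrw R4, ← Finset.sum_add_distrib, ← Finset.sum_add_distrib,
    ← Finset.sum_add_distrib, Finset.mul_sum]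
  apply Finset.sum_le_sum
  intro z _
  have hz1 := z.1.isLt; have hz2 := z.2.isLt
  have e1 := hm1 z; have e2 := hm2 z; have e3 := hm3 z; have e4 := hm4 z
  simp only [e1, e2, e3, e4]
  split_ifs <;> first
      | linarith [hg z]
      | (exfalso; omega)
end GridAux
end GridAuxSection

open GridAux SimpleGraph in
open FracDim in
/-- For the grid graph `P_s □ P_t` (`s, t ≥ 2`), the Cartesian product of paths:
`κ(P_s □ P_t) = s + t − 2`, and for every real `k` with `1 ≤ k ≤ s + t − 2`,
`dim_f^k(P_s □ P_t) = 2k`. -/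
theorem fracKDim_grid (s t : ℕ) (hs : 2 ≤ s) (ht : 2 ≤ t) :
    kappa ((SimpleGraph.pathGraph s).boxProd (SimpleGraph.pathGraph t)) = s + t - 2 ∧
      ∀ k : ℝ, 1 ≤ k → k ≤ (s : ℝ) + (t : ℝ) - 2 →
        fracKDim ((SimpleGraph.pathGraph s).boxProd (SimpleGraph.pathGraph t)) k
          = 2 * k := by
  have hcast : ((s + t - 2 : ℕ) : ℝ) = (s : ℝ) + (t : ℝ) - 2 := by
    have h2 : 2 ≤ s + t := by omega
    push_cast [h2]
    ring
  -- the special pair with minimum resolving set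
  set x1 : Fin s × Fin t := (⟨s-2, by omega⟩, ⟨0, by omega⟩) with hx1
  set y1 : Fin s × Fin t := (⟨s-1, by omega⟩, ⟨1, by omega⟩) with hy1
  have hne1 : x1 ≠ y1 := by
    intro h
    have h1 : s - 2 = s - 1 := congrArg (fun z : Fin s × Fin t => z.1.val) h
    omega
  have hcard1 : (resSet ((pathGraph s) □ (pathGraph t)) x1 y1).card = s + t - 2 :=
    card_R1_gen hs ht _
      (fun i hi j hj => mem_resSet (by omega) (by omega) x1 y1 (⟨i, hi⟩, ⟨j, hj⟩))
  have hlow : ∀ (x y : Fin s × Fin t), x ≠ y →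
      s + t - 2 ≤ (resSet ((pathGraph s) □ (pathGraph t)) x y).card := by
    intro x y hxy
    exact le_trans (count_main hs ht x y hxy) (Finset.card_filter_le _ _)
  constructor
  · -- κ = s + t - 2
    apply le_antisymm
    · exact Nat.sInf_le ⟨x1, y1, hne1, hcard1⟩
    · refine le_csInf ⟨s + t - 2, ⟨x1, y1, hne1, hcard1⟩⟩ ?_
      rintro n ⟨x, y, hxy, rfl⟩
      exact hlow x y hxy
  · intro k hk1 hk2
    have h2s : (2:ℝ) ≤ (s:ℝ) := by exact_mod_cast hs
    have h2t : (2:ℝ) ≤ (t:ℝ) := by exact_mod_cast ht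
    have hstpos : (0:ℝ) < (s:ℝ) + (t:ℝ) - 2 := by linarith
    set c : ℝ := k / ((s:ℝ) + (t:ℝ) - 2) with hc
    have hc0 : 0 ≤ c := div_nonneg (by linarith) (le_of_lt hstpos)
    have hc1 : c ≤ 1 := (div_le_one hstpos).mpr hk2
    set g0 : Fin s × Fin t → ℝ := fun v => if Bp s t v then c else 0 with hg0
    have hres : IsKResolving ((pathGraph s) □ (pathGraph t)) k g0 := by
      constructor
      · intro v
        simp only [hg0]
        split_ifs
        · exact ⟨hc0, hc1⟩
        · exact ⟨le_refl 0, zero_le_one⟩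
      · intro x y hxy
        have hsum : ∑ z ∈ resSet ((pathGraph s) □ (pathGraph t)) x y, g0 z
            = (((resSet ((pathGraph s) □ (pathGraph t)) x y).filter (Bp s t)).card : ℝ) * c := by
          simp only [hg0]
          rw [← Finset.sum_filter, Finset.sum_const, nsmul_eq_mul]
        rw [hsum]
        have hge : ((s + t - 2 : ℕ) : ℝ) ≤
            (((resSet ((pathGraph s) □ (pathGraph t)) x y).filter (Bp s t)).card : ℝ) :=
          Nat.cast_le.mpr (count_main hs ht x y hxy)
        rw [hcast] at hge
        have : ((s:ℝ) + (t:ℝ) - 2) * c = k := by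
          rw [hc]; field_simp
        nlinarith [mul_le_mul_of_nonneg_right hge hc0]
    have hsumg0 : ∑ v, g0 v = 2 * k := by
      simp only [hg0]
      rw [← Finset.sum_filter, Finset.sum_const, nsmul_eq_mul]
      have hB := card_B_gen (s := s) (t := t) hs ht
      have : (((univ : Finset (Fin s × Fin t)).filter
          (fun z => z.1.val = 0 ∨ z.1.val = s - 1 ∨ z.2.val = 0 ∨ z.2.val = t - 1)).card : ℝ)
          = 2 * ((s:ℝ) + (t:ℝ) - 2) := by
        rw [hB]
        have h4 : 4 ≤ 2*s + 2*t := by omega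
        push_cast [h4]
        ring
      rw [show ((univ : Finset (Fin s × Fin t)).filter (Bp s t))
        = ((univ : Finset (Fin s × Fin t)).filter
          (fun z => z.1.val = 0 ∨ z.1.val = s - 1 ∨ z.2.val = 0 ∨ z.2.val = t - 1)) from rfl]
      rw [this, hc]
      field_simp
    have hmemA : (2 * k) ∈ {r : ℝ | ∃ g : Fin s × Fin t → ℝ,
        IsKResolving ((pathGraph s) □ (pathGraph t)) k g ∧ r = ∑ v, g v} :=
      ⟨g0, hres, hsumg0.symm⟩
    have hlowA : ∀ r ∈ {r : ℝ | ∃ g : Fin s × Fin t → ℝ,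
        IsKResolving ((pathGraph s) □ (pathGraph t)) k g ∧ r = ∑ v, g v}, 2 * k ≤ r := by
      rintro r ⟨g, ⟨hg01, hgres⟩, rfl⟩
      set p2 : Fin s × Fin t := (⟨1, by omega⟩, ⟨t-1, by omega⟩) with hp2
      set q2 : Fin s × Fin t := (⟨0, by omega⟩, ⟨t-2, by omega⟩) with hq2
      set p3 : Fin s × Fin t := (⟨1, by omega⟩, ⟨0, by omega⟩) with hp3
      set q3 : Fin s × Fin t := (⟨0, by omega⟩, ⟨1, by omega⟩) with hq3
      set p4 : Fin s × Fin t := (⟨s-1, by omega⟩, ⟨t-2, by omega⟩) with hp4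
      set q4 : Fin s × Fin t := (⟨s-2, by omega⟩, ⟨t-1, by omega⟩) with hq4
      have hne2 : p2 ≠ q2 := by
        intro h
        have h1 : 1 = 0 := congrArg (fun z : Fin s × Fin t => z.1.val) h
        omega
      have hne3 : p3 ≠ q3 := by
        intro h
        have h1 : 1 = 0 := congrArg (fun z : Fin s × Fin t => z.1.val) h
        omega
      have hne4 : p4 ≠ q4 := by
        intro h
        have h1 : s-1 = s-2 := congrArg (fun z : Fin s × Fin t => z.1.val) h
        omega
      have hb1 := hgres x1 y1 hne1
      have hb2 := hgres p2 q2 hne2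
      have hb3 := hgres p3 q3 hne3
      have hb4 := hgres p4 q4 hne4
      have hs1 : 1 ≤ s := by omega
      have ht1 : 1 ≤ t := by omega
      have hm1' : ∀ z : Fin s × Fin t,
          z ∈ resSet ((pathGraph s) □ (pathGraph t)) x1 y1 ↔
          (s-2-z.1.val)+(z.1.val-(s-2)) + ((0-z.2.val)+(z.2.val-0)) ≠
            (s-1-z.1.val)+(z.1.val-(s-1)) + ((1-z.2.val)+(z.2.val-1)) :=
        fun z => mem_resSet hs1 ht1 x1 y1 z
      have hm2' : ∀ z : Fin s × Fin t,
          z ∈ resSet ((pathGraph s) □ (pathGraph t)) p2 q2 ↔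
          (1-z.1.val)+(z.1.val-1) + ((t-1-z.2.val)+(z.2.val-(t-1))) ≠
            (0-z.1.val)+(z.1.val-0) + ((t-2-z.2.val)+(z.2.val-(t-2))) :=
        fun z => mem_resSet hs1 ht1 p2 q2 z
      have hm3' : ∀ z : Fin s × Fin t,
          z ∈ resSet ((pathGraph s) □ (pathGraph t)) p3 q3 ↔
          (1-z.1.val)+(z.1.val-1) + ((0-z.2.val)+(z.2.val-0)) ≠
            (0-z.1.val)+(z.1.val-0) + ((1-z.2.val)+(z.2.val-1)) :=
        fun z => mem_resSet hs1 ht1 p3 q3 z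
      have hm4' : ∀ z : Fin s × Fin t,
          z ∈ resSet ((pathGraph s) □ (pathGraph t)) p4 q4 ↔
          (s-1-z.1.val)+(z.1.val-(s-1)) + ((t-2-z.2.val)+(z.2.val-(t-2))) ≠
            (s-2-z.1.val)+(z.1.val-(s-2)) + ((t-1-z.2.val)+(z.2.val-(t-1))) :=
        fun z => mem_resSet hs1 ht1 p4 q4 z
      have hfp := four_pairs_gen hs ht
        (resSet ((pathGraph s) □ (pathGraph t)) x1 y1)
        (resSet ((pathGraph s) □ (pathGraph t)) p2 q2)
        (resSet ((pathGraph s) □ (pathGraph t)) p3 q3)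
        (resSet ((pathGraph s) □ (pathGraph t)) p4 q4)
        hm1' hm2' hm3' hm4' g (fun v => (hg01 v).1)
      linarith
    show sInf _ = 2 * k
    apply le_antisymm
    · exact csInf_le ⟨2 * k, fun r hr => hlowA r hr⟩ hmemA
    · exact le_csInf ⟨2 * k, hmemA⟩ hlowA
end
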